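/- arXiv:1411.1480 — 2 statements merged into one kernel-verified Lean document; each statement's English description precedes it below -/
import Mathlib

section
/- For k ≥ t+1, the family G(k,t) is a closed intersecting family CIF(k,t), and every transversal T of G(k,t) satisfies |T ∩ X_n| = 1 for each n with 0 ≤ n ≤ t−1. -/
open Finset

variable {α : Type*} {β : Type*}

/-- `C` is a blocking set of the family `F`: it meets every block of `F`. -/
def IsBlocking (F : Set (Finset α)) (C : Finset α) : Prop :=
  ∀ B ∈ F, ∃ x ∈ B, x ∈ C

/-- The transversal number `τ(F)`: the minimum size of a (finite) blocking set. -/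
noncomputable def tau (F : Set (Finset α)) : ℕ :=
  sInf {n | ∃ C : Finset α, C.card = n ∧ IsBlocking F C}

/-- The family `F^⊤` of transversals, i.e. minimum-size blocking sets of `F`. -/
noncomputable def transversals (F : Set (Finset α)) : Set (Finset α) :=
  {C | IsBlocking F C ∧ C.card = tau F}

/-- A family is intersecting if any two of its blocks meet. -/
def FamIntersecting (F : Set (Finset α)) : Prop :=
  ∀ A ∈ F, ∀ B ∈ F, ∃ x ∈ A, x ∈ B

/-- A family is `k`-uniform if all its blocks have size `k`. -/
def FamUniform (F : Set (Finset α)) (k : ℕ) : Prop :=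
  ∀ B ∈ F, B.card = k

/-- `F` has a finite blocking set (τ(F) < ∞). -/
def HasBlocking (F : Set (Finset α)) : Prop :=
  ∃ C : Finset α, IsBlocking F C

/-- Maximal intersecting family of `k`-sets: uniform, τ < ∞ and `F = F^⊤`. -/
noncomputable def MIF (F : Set (Finset α)) (k : ℕ) : Prop :=
  FamUniform F k ∧ HasBlocking F ∧ F = transversals F

/-- Closed intersecting family `CIF(k,t)`: a `k`-uniform intersecting family with
`τ(F) = t ≤ k - 1` and `F = (F ∪ F^⊤)^⊤`. -/
noncomputable def CIF (F : Set (Finset α)) (k t : ℕ) : Prop :=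
  FamUniform F k ∧ FamIntersecting F ∧ tau F = t ∧ t ≤ k - 1 ∧
    F = transversals (F ∪ transversals F)

/-- The point set of a family. -/
def pts (F : Set (Finset α)) : Set α := ⋃ B ∈ F, (B : Set α)

/-- `G ⊛ H`: all unions `A ∪ B` with `A ∈ G`, `B ∈ H` (for point-disjoint families
these are disjoint unions). -/
def star [DecidableEq α] (G H : Set (Finset α)) : Set (Finset α) :=
  {C | ∃ A ∈ G, ∃ B ∈ H, C = A ∪ B}


/-- The size of the class `X_n` in the cycle construction `G(k,t)`. -/
def sz (k t n : ℕ) : ℕ := if n ≤ (t - 1) / 2 then k - t / 2 else k - (t - 1) / 2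

/-- The class `X_n` of the cycle construction: points `(n, p)` with `p < |X_n|`. -/
def cls (k t n : ℕ) : Finset (ℕ × ℕ) := {n} ×ˢ Finset.range (sz k t n)

/-- The family `G(k,t)`: all `k`-sets consisting of a class `X_n` together with one
chosen point from each of the next `k - |X_n|` classes around the `t`-cycle. -/
def Gfam (k t : ℕ) : Set (Finset (ℕ × ℕ)) :=
  {B | ∃ n < t, ∃ g : ℕ → ℕ × ℕ,
    (∀ i, 1 ≤ i → i ≤ k - sz k t n → g i ∈ cls k t ((n + i) % t)) ∧
    B = cls k t n ∪ Finset.image g (Finset.Icc 1 (k - sz k t n))}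
section Aux
variable {k t : ℕ}

lemma sz_le (k t n : ℕ) : sz k t n ≤ k := by unfold sz; split <;> omega

lemma sz_ge (k t n : ℕ) : k - t/2 ≤ sz k t n := by unfold sz; split <;> omega

lemma d_eq (k t n : ℕ) (hk : t ≤ k) :
    k - sz k t n = if n ≤ (t-1)/2 then t/2 else (t-1)/2 := by
  unfold sz; by_cases h : n ≤ (t-1)/2 <;> simp [h] <;> omega

lemma d_le (k t n : ℕ) (hk : t ≤ k) : k - sz k t n ≤ t/2 := by
  rw [d_eq k t n hk]; split <;> omega

lemma mem_cls {k t n : ℕ} {p : ℕ × ℕ} : p ∈ cls k t n ↔ p.1 = n ∧ p.2 < sz k t n := by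
  cases p with
  | mk a b =>
    simp only [cls, Finset.mem_product, Finset.mem_singleton, Finset.mem_range]

lemma base_mem_cls (ht : 1 ≤ t) (hk : t ≤ k) (n : ℕ) : (n, 0) ∈ cls k t n := by
  rw [mem_cls]; have := sz_ge k t n; constructor; rfl; omega

lemma cls_disj {n m : ℕ} (h : n ≠ m) : Disjoint (cls k t n) (cls k t m) := by
  rw [Finset.disjoint_left]
  intro p hp hq
  rw [mem_cls] at hp hq
  exact h (hp.1 ▸ hq.1 ▸ rfl)

lemma mod_cases (ht : 1 ≤ t) {a : ℕ} (h : a < 2*t) :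
    (a < t ∧ a % t = a) ∨ (t ≤ a ∧ a % t = a - t) := by
  rcases Nat.lt_or_ge a t with h' | h'
  · exact Or.inl ⟨h', Nat.mod_eq_of_lt h'⟩
  · refine Or.inr ⟨h', ?_⟩
    rw [Nat.mod_eq_sub_mod h', Nat.mod_eq_of_lt (by omega)]

lemma mod_lt' (ht : 1 ≤ t) (a : ℕ) : a % t < t := Nat.mod_lt _ (by omega)

lemma mod_inj (ht : 1 ≤ t) {n i j : ℕ} (hn : n < t) (hi : i < t) (hj : j < t)
    (h : (n+i) % t = (n+j) % t) : i = j := by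
  rcases mod_cases ht (a := n+i) (by omega) with ⟨h1, h2⟩ | ⟨h1, h2⟩ <;>
    rcases mod_cases ht (a := n+j) (by omega) with ⟨h3, h4⟩ | ⟨h3, h4⟩ <;> omega

lemma mod_ne_base (ht : 1 ≤ t) {n i : ℕ} (hn : n < t) (hi1 : 1 ≤ i) (hi2 : i < t) :
    (n + i) % t ≠ n := by
  rcases mod_cases ht (a := n+i) (by omega) with ⟨h1, h2⟩ | ⟨h1, h2⟩ <;> omega

end Aux
section Arc
variable {k t : ℕ}

/-- Any two arcs cover each other: for distinct bases, one lies in the other's arc. -/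
lemma arc_cover (ht : 1 ≤ t) (hk : t + 1 ≤ k) {n m : ℕ} (hn : n < t) (hm : m < t)
    (hnm : n ≠ m) :
    (∃ r, 1 ≤ r ∧ r ≤ k - sz k t n ∧ (n + r) % t = m) ∨
    (∃ r, 1 ≤ r ∧ r ≤ k - sz k t m ∧ (m + r) % t = n) := by
  have hdn := d_eq k t n (by omega)
  have hdm := d_eq k t m (by omega)
  rcases Nat.lt_or_ge n m with h | h
  · by_cases hc : m - n ≤ k - sz k t n
    · exact Or.inl ⟨m - n, by omega, hc, by rw [Nat.mod_eq_of_lt (by omega)]; omega⟩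
    · refine Or.inr ⟨t - (m - n), by omega, by split at hdn <;> split at hdm <;> omega, ?_⟩
      rcases mod_cases ht (a := m + (t - (m-n))) (by omega) with ⟨h1, h2⟩ | ⟨h1, h2⟩ <;> omega
  · have h' : m < n := by omega
    by_cases hc : n - m ≤ k - sz k t m
    · exact Or.inr ⟨n - m, by omega, hc, by rw [Nat.mod_eq_of_lt (by omega)]; omega⟩
    · refine Or.inl ⟨t - (n - m), by omega, by split at hdn <;> split at hdm <;> omega, ?_⟩
      rcases mod_cases ht (a := n + (t - (n-m))) (by omega) with ⟨h1, h2⟩ | ⟨h1, h2⟩ <;> omega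

/-- If `n` is strictly inside the arc of `m`, then `m` is not in the arc of `n`. -/
lemma arc_asym (ht : 1 ≤ t) (hk : t + 1 ≤ k) {n m r : ℕ} (hm : m < t)
    (hr1 : 1 ≤ r) (hr2 : r ≤ k - sz k t m) (hn : (m + r) % t = n) :
    ¬ ∃ s, 1 ≤ s ∧ s ≤ k - sz k t n ∧ (n + s) % t = m := by
  rintro ⟨s, hs1, hs2, hs3⟩
  have hdn := d_eq k t n (by omega)
  have hdm := d_eq k t m (by omega)
  have hrt : r ≤ t/2 := by split at hdm <;> omega
  have hnt : n < t := hn ▸ mod_lt' ht _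
  have hst : s ≤ t/2 := by split at hdn <;> omega
  rcases mod_cases ht (a := m + r) (by omega) with ⟨h1, h2⟩ | ⟨h1, h2⟩ <;>
    rcases mod_cases ht (a := n + s) (by omega) with ⟨h3, h4⟩ | ⟨h3, h4⟩ <;>
    split at hdn <;> split at hdm <;> omega

end Arc
section Blocks
variable {k t : ℕ}

lemma mem_Gfam {B : Finset (ℕ × ℕ)} :
    B ∈ Gfam k t ↔ ∃ n, n < t ∧ ∃ g : ℕ → ℕ × ℕ,
      (∀ i, 1 ≤ i → i ≤ k - sz k t n → g i ∈ cls k t ((n + i) % t)) ∧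
      B = cls k t n ∪ Finset.image g (Finset.Icc 1 (k - sz k t n)) := by
  simp only [Gfam, Set.mem_setOf_eq, exists_prop]

lemma image_card (ht : 1 ≤ t) (hk : t + 1 ≤ k) {n : ℕ} (hn : n < t) {g : ℕ → ℕ × ℕ}
    (hg : ∀ i, 1 ≤ i → i ≤ k - sz k t n → g i ∈ cls k t ((n + i) % t)) :
    (Finset.image g (Finset.Icc 1 (k - sz k t n))).card = k - sz k t n := by
  rw [Finset.card_image_of_injOn, Nat.card_Icc]
  · omega
  · intro i hi j hj hij
    simp only [Finset.coe_Icc, Set.mem_Icc] at hi hj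
    have h1 := (mem_cls.1 (hg i hi.1 hi.2)).1
    have h2 := (mem_cls.1 (hg j hj.1 hj.2)).1
    have hd := d_le k t n (by omega)
    exact mod_inj ht hn (by omega) (by omega) (h1 ▸ h2 ▸ hij ▸ rfl)

lemma image_disj (ht : 1 ≤ t) (hk : t + 1 ≤ k) {n : ℕ} (hn : n < t) {g : ℕ → ℕ × ℕ}
    (hg : ∀ i, 1 ≤ i → i ≤ k - sz k t n → g i ∈ cls k t ((n + i) % t)) :
    Disjoint (cls k t n) (Finset.image g (Finset.Icc 1 (k - sz k t n))) := by
  rw [Finset.disjoint_left]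
  intro p hp hq
  rw [Finset.mem_image] at hq
  obtain ⟨i, hi, rfl⟩ := hq
  rw [Finset.mem_Icc] at hi
  have h1 := (mem_cls.1 (hg i hi.1 hi.2)).1
  have h2 := (mem_cls.1 hp).1
  have hd := d_le k t n (by omega)
  exact mod_ne_base ht hn hi.1 (by omega) (h1 ▸ h2)

lemma Gfam_uniform (ht : 1 ≤ t) (hk : t + 1 ≤ k) : FamUniform (Gfam k t) k := by
  intro B hB
  obtain ⟨n, hn, g, hg, rfl⟩ := mem_Gfam.1 hB
  rw [Finset.card_union_of_disjoint (image_disj ht hk hn hg), image_card ht hk hn hg]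
  have h1 := sz_le k t n
  have h2 : cls k t n = {n} ×ˢ Finset.range (sz k t n) := rfl
  rw [h2, Finset.card_product, Finset.card_singleton, Finset.card_range]
  omega

lemma Gfam_nonempty (ht : 1 ≤ t) (hk : t + 1 ≤ k) : ∃ B, B ∈ Gfam k t := by
  refine ⟨_, mem_Gfam.2 ⟨0, by omega, fun i => (i % t, 0), fun i h1 h2 => ?_, rfl⟩⟩
  have : (0 + i) % t = i % t := by rw [Nat.zero_add]
  rw [this]
  exact base_mem_cls ht (by omega) _

lemma Gfam_intersecting (ht : 1 ≤ t) (hk : t + 1 ≤ k) : FamIntersecting (Gfam k t) := by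
  intro A hA B hB
  obtain ⟨n, hn, g, hg, rfl⟩ := mem_Gfam.1 hA
  obtain ⟨m, hm, g', hg', rfl⟩ := mem_Gfam.1 hB
  by_cases hnm : n = m
  · subst hnm
    exact ⟨(n, 0), Finset.mem_union_left _ (base_mem_cls ht (by omega) n),
      Finset.mem_union_left _ (base_mem_cls ht (by omega) n)⟩
  · rcases arc_cover ht hk hn hm hnm with ⟨r, hr1, hr2, hr3⟩ | ⟨r, hr1, hr2, hr3⟩
    · refine ⟨g r, Finset.mem_union_right _ (Finset.mem_image_of_mem g (Finset.mem_Icc.2 ⟨hr1, hr2⟩)), ?_⟩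
      exact Finset.mem_union_left _ (by rw [← hr3]; exact hg r hr1 hr2)
    · refine ⟨g' r, ?_, Finset.mem_union_right _ (Finset.mem_image_of_mem g' (Finset.mem_Icc.2 ⟨hr1, hr2⟩))⟩
      exact Finset.mem_union_left _ (by rw [← hr3]; exact hg' r hr1 hr2)

lemma block_avoid (ht : 1 ≤ t) (hk : t + 1 ≤ k) {C : Finset (ℕ × ℕ)}
    (hC : IsBlocking (Gfam k t) C) {n : ℕ} (hn : n < t)
    (hempty : ∀ x ∈ cls k t n, x ∉ C) :
    ∃ r, 1 ≤ r ∧ r ≤ k - sz k t n ∧ cls k t ((n + r) % t) ⊆ C := by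
  classical
  by_contra hfull
  push_neg at hfull
  have hch : ∀ i, ∃ p : ℕ × ℕ, p ∈ cls k t ((n + i) % t) ∧
      (1 ≤ i → i ≤ k - sz k t n → p ∉ C) := by
    intro i
    by_cases hi : 1 ≤ i ∧ i ≤ k - sz k t n
    · have h := hfull i hi.1 hi.2
      rw [Finset.not_subset] at h
      obtain ⟨p, hp1, hp2⟩ := h
      exact ⟨p, hp1, fun _ _ => hp2⟩
    · exact ⟨((n + i) % t, 0), base_mem_cls ht (by omega) _,
        fun h1 h2 => absurd ⟨h1, h2⟩ hi⟩
  choose g hg1 hg2 using hch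
  have hB : cls k t n ∪ Finset.image g (Finset.Icc 1 (k - sz k t n)) ∈ Gfam k t :=
    mem_Gfam.2 ⟨n, hn, g, fun i _ _ => hg1 i, rfl⟩
  obtain ⟨x, hx1, hx2⟩ := hC _ hB
  rcases Finset.mem_union.1 hx1 with h | h
  · exact hempty x h hx2
  · rw [Finset.mem_image] at h
    obtain ⟨i, hi, rfl⟩ := h
    rw [Finset.mem_Icc] at hi
    exact hg2 i hi.1 hi.2 hx2

end Blocks
section Count
variable {k t : ℕ}

lemma cls_card (k t n : ℕ) : (cls k t n).card = sz k t n := by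
  rw [cls, Finset.card_product, Finset.card_singleton, Finset.card_range, one_mul]

lemma full_unique (ht : 1 ≤ t) (hk : t + 1 ≤ k) {C : Finset (ℕ × ℕ)} (hcard : C.card ≤ k)
    {m m' : ℕ} (h1 : cls k t m ⊆ C) (h2 : cls k t m' ⊆ C) : m = m' := by
  by_contra hne
  have hd : Disjoint (cls k t m) (cls k t m') := cls_disj hne
  have hle : (cls k t m ∪ cls k t m').card ≤ C.card :=
    Finset.card_le_card (Finset.union_subset h1 h2)
  rw [Finset.card_union_of_disjoint hd, cls_card, cls_card] at hle
  have := sz_ge k t m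
  have := sz_ge k t m'
  omega

lemma inter_sum_le (C : Finset (ℕ × ℕ)) (s : Finset ℕ) :
    ∑ n ∈ s, (C ∩ cls k t n).card ≤ C.card := by
  classical
  rw [← Finset.card_biUnion]
  · exact Finset.card_le_card (by
      intro x hx
      rw [Finset.mem_biUnion] at hx
      obtain ⟨n, _, hx⟩ := hx
      exact (Finset.mem_inter.1 hx).1)
  · intro x _ y _ hxy
    exact Finset.disjoint_of_subset_left Finset.inter_subset_right
      (Finset.disjoint_of_subset_right Finset.inter_subset_right (cls_disj hxy))

lemma blocking_count (ht : 1 ≤ t) (hk : t + 1 ≤ k) {C : Finset (ℕ × ℕ)}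
    (hC : IsBlocking (Gfam k t) C) (hcard : C.card ≤ t) :
    C.card = t ∧ ∀ n < t, (C ∩ cls k t n).card = 1 := by
  classical
  have hmeet : ∀ n < t, (C ∩ cls k t n).Nonempty := by
    by_contra hnot
    push_neg at hnot
    obtain ⟨n0, hn0, hemp0⟩ := hnot
    have hemp0' : ∀ x ∈ cls k t n0, x ∉ C := by
      intro x hx hxC
      have hx' : x ∈ C ∩ cls k t n0 := Finset.mem_inter.2 ⟨hxC, hx⟩
      rw [hemp0] at hx'
      simp at hx'
    obtain ⟨r0, hr01, hr02, hfull⟩ := block_avoid ht hk hC hn0 hemp0'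
    set m := (n0 + r0) % t with hm_def
    have hm : m < t := mod_lt' ht _
    set U := (Finset.range t).filter (fun n => ¬ (C ∩ cls k t n).Nonempty) with hU_def
    set S := (Finset.range t).filter (fun n => (C ∩ cls k t n).Nonempty) with hS_def
    have hUS : S.card + U.card = t := by
      rw [hS_def, hU_def, Finset.card_filter_add_card_filter_not, Finset.card_range]
    have hUmapsto : ∀ n ∈ U, ∃ s, 1 ≤ s ∧ s ≤ k - sz k t n ∧ (n + s) % t = m := by
      intro n hnU
      rw [hU_def, Finset.mem_filter, Finset.mem_range] at hnU
      have hemp : ∀ x ∈ cls k t n, x ∉ C := by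
        intro x hx hxC
        exact hnU.2 ⟨x, Finset.mem_inter.2 ⟨hxC, hx⟩⟩
      obtain ⟨s, hs1, hs2, hsub⟩ := block_avoid ht hk hC hnU.1 hemp
      exact ⟨s, hs1, hs2, full_unique ht hk (by omega) hsub hfull⟩
    have hUsub : U ⊆ Finset.image (fun r => (m + (t - r)) % t) (Finset.Icc 1 (t/2)) := by
      intro n hnU
      have hnt : n < t := by
        rw [hU_def, Finset.mem_filter, Finset.mem_range] at hnU
        exact hnU.1
      obtain ⟨s, hs1, hs2, hs3⟩ := hUmapsto n hnU
      have hd := d_le k t n (by omega)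
      refine Finset.mem_image.2 ⟨s, Finset.mem_Icc.2 ⟨hs1, by omega⟩, ?_⟩
      rcases mod_cases ht (a := n + s) (by omega) with ⟨h1, h2⟩ | ⟨h1, h2⟩ <;>
        rcases mod_cases ht (a := m + (t - s)) (by omega) with ⟨h3, h4⟩ | ⟨h3, h4⟩ <;> omega
    have hUcard : U.card ≤ t/2 := by
      calc U.card ≤ _ := Finset.card_le_card hUsub
        _ ≤ (Finset.Icc 1 (t/2)).card := Finset.card_image_le
        _ = t/2 := by rw [Nat.card_Icc]; omega
    have hmS : m ∈ S := by
      rw [hS_def, Finset.mem_filter, Finset.mem_range]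
      exact ⟨hm, ⟨(m, 0), Finset.mem_inter.2
        ⟨hfull (base_mem_cls ht (by omega) m), base_mem_cls ht (by omega) m⟩⟩⟩
    have hsum : ∑ n ∈ S, (C ∩ cls k t n).card ≤ C.card := inter_sum_le C S
    have hCm : (C ∩ cls k t m).card = sz k t m := by
      rw [Finset.inter_eq_right.2 hfull, cls_card]
    have hsum2 : sz k t m + (S.card - 1) ≤ ∑ n ∈ S, (C ∩ cls k t n).card := by
      rw [← Finset.add_sum_erase S _ hmS, hCm]
      have h1 : (S.erase m).card ≤ ∑ n ∈ S.erase m, (C ∩ cls k t n).card := by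
        rw [Finset.card_eq_sum_ones]
        apply Finset.sum_le_sum
        intro i hi
        have hiS := Finset.mem_of_mem_erase hi
        rw [hS_def, Finset.mem_filter] at hiS
        exact Finset.card_pos.2 hiS.2
      have h2 : (S.erase m).card = S.card - 1 := Finset.card_erase_of_mem hmS
      omega
    have hszm := sz_ge k t m
    have hdm := d_eq k t m (by omega)
    -- the arithmetic forces: t even, U.card = t/2, m ≤ (t-1)/2
    have hmle : m ≤ (t-1)/2 := by
      by_contra hmle
      rw [if_neg hmle] at hdm
      omega
    rw [if_pos hmle] at hdm
    have hteven : t - t/2 = t/2 := by omega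
    have hUcard2 : (Finset.image (fun r => (m + (t - r)) % t) (Finset.Icc 1 (t/2))).card ≤ U.card := by
      have : U.card = t/2 := by omega
      rw [this]
      calc _ ≤ (Finset.Icc 1 (t/2)).card := Finset.card_image_le
        _ = t/2 := by rw [Nat.card_Icc]; omega
    have hUeq := Finset.eq_of_subset_of_card_le hUsub hUcard2
    have hn1 : (m + (t - t/2)) % t ∈ U := by
      rw [hUeq]
      exact Finset.mem_image.2 ⟨t/2, Finset.mem_Icc.2 ⟨by omega, le_refl _⟩, rfl⟩
    obtain ⟨s, hs1, hs2, hs3⟩ := hUmapsto _ hn1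
    exact arc_asym ht hk hm (r := t/2) (by omega) (by omega)
      (by rw [hteven]) ⟨s, hs1, hs2, hs3⟩
  -- all classes met: counting
  have hsum : ∑ n ∈ Finset.range t, (C ∩ cls k t n).card ≤ C.card := inter_sum_le C _
  have hge : ∀ n ∈ Finset.range t, 1 ≤ (C ∩ cls k t n).card := by
    intro n hn
    exact Finset.card_pos.2 (hmeet n (Finset.mem_range.1 hn))
  have hsum_ge : t ≤ ∑ n ∈ Finset.range t, (C ∩ cls k t n).card := by
    calc t = ∑ _n ∈ Finset.range t, 1 := by rw [Finset.sum_const, Finset.card_range, smul_eq_mul, mul_one]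
      _ ≤ _ := Finset.sum_le_sum hge
  refine ⟨by omega, ?_⟩
  intro n hn
  by_contra hne
  have h2 : 2 ≤ (C ∩ cls k t n).card := by
    have := hge n (Finset.mem_range.2 hn)
    omega
  have hsplit : ∑ i ∈ Finset.range t, (C ∩ cls k t i).card =
      (C ∩ cls k t n).card + ∑ i ∈ (Finset.range t).erase n, (C ∩ cls k t i).card :=
    (Finset.add_sum_erase _ _ (Finset.mem_range.2 hn)).symm
  have h3 : ((Finset.range t).erase n).card ≤ ∑ i ∈ (Finset.range t).erase n, (C ∩ cls k t i).card := by
    rw [Finset.card_eq_sum_ones]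
    apply Finset.sum_le_sum
    intro i hi
    exact hge i (Finset.mem_of_mem_erase hi)
  have h4 : ((Finset.range t).erase n).card = t - 1 := by
    rw [Finset.card_erase_of_mem (Finset.mem_range.2 hn), Finset.card_range]
  omega

end Count
section Tau
variable {k t : ℕ}

lemma tau_Gfam (ht : 1 ≤ t) (hk : t + 1 ≤ k) : tau (Gfam k t) = t := by
  classical
  set D := Finset.image (fun n => ((n, 0) : ℕ × ℕ)) (Finset.range t) with hD
  have hinj : Function.Injective (fun n => ((n, 0) : ℕ × ℕ)) := by
    intro a b h
    exact congrArg Prod.fst h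
  have hDcard : D.card = t := by
    rw [hD, Finset.card_image_of_injective _ hinj, Finset.card_range]
  have hDblock : IsBlocking (Gfam k t) D := by
    intro B hB
    obtain ⟨n, hn, g, hg, rfl⟩ := mem_Gfam.1 hB
    exact ⟨(n, 0), Finset.mem_union_left _ (base_mem_cls ht (by omega) n),
      Finset.mem_image.2 ⟨n, Finset.mem_range.2 hn, rfl⟩⟩
  have hmem : t ∈ {n | ∃ C : Finset (ℕ × ℕ), C.card = n ∧ IsBlocking (Gfam k t) C} :=
    ⟨D, hDcard, hDblock⟩
  apply le_antisymm
  · exact Nat.sInf_le hmem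
  · apply le_csInf ⟨t, hmem⟩
    rintro b ⟨C, hCc, hCb⟩
    by_contra hb
    push_neg at hb
    have := (blocking_count ht hk hCb (by omega)).1
    omega

lemma transversal_struct (ht : 1 ≤ t) (hk : t + 1 ≤ k) {T : Finset (ℕ × ℕ)}
    (hT : T ∈ transversals (Gfam k t)) :
    T.card = t ∧ ∀ n < t, (T ∩ cls k t n).card = 1 := by
  obtain ⟨hb, hc⟩ := hT
  rw [tau_Gfam ht hk] at hc
  exact ⟨hc, (blocking_count ht hk hb (le_of_eq hc)).2⟩

lemma blocksT (ht : 1 ≤ t) (hk : t + 1 ≤ k) {C : Finset (ℕ × ℕ)}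
    (hC : IsBlocking (transversals (Gfam k t)) C) :
    ∃ m, m < t ∧ cls k t m ⊆ C := by
  classical
  by_contra h
  push_neg at h
  have hch : ∀ m, ∃ p : ℕ × ℕ, p ∈ cls k t (m % t) ∧ p ∉ C := by
    intro m
    have h2 := h (m % t) (mod_lt' ht m)
    rw [Finset.not_subset] at h2
    exact h2
  choose f hf1 hf2 using hch
  set T := Finset.image f (Finset.range t) with hT
  have hfn : ∀ n, n < t → f n ∈ cls k t n := by
    intro n hn
    have := hf1 n
    rwa [Nat.mod_eq_of_lt hn] at this
  have hTb : IsBlocking (Gfam k t) T := by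
    intro B hB
    obtain ⟨n, hn, g, hg, rfl⟩ := mem_Gfam.1 hB
    exact ⟨f n, Finset.mem_union_left _ (hfn n hn),
      Finset.mem_image.2 ⟨n, Finset.mem_range.2 hn, rfl⟩⟩
  have hTc : T.card = t := by
    rw [hT, Finset.card_image_of_injOn, Finset.card_range]
    intro a ha b hb hab
    rw [Finset.coe_range, Set.mem_Iio] at ha hb
    have h1 := (mem_cls.1 (hfn a ha)).1
    have h2 := (mem_cls.1 (hfn b hb)).1
    rw [← h1, ← h2, hab]
  have hTtr : T ∈ transversals (Gfam k t) := ⟨hTb, by rw [tau_Gfam ht hk]; exact hTc⟩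
  obtain ⟨x, hx1, hx2⟩ := hC _ hTtr
  rw [hT, Finset.mem_image] at hx1
  obtain ⟨n, _, rfl⟩ := hx1
  exact hf2 n hx2

end Tau
section Closure
variable {k t : ℕ}

lemma union_blocking_count (ht : 1 ≤ t) (hk : t + 1 ≤ k) {C : Finset (ℕ × ℕ)}
    (hC : IsBlocking (Gfam k t ∪ transversals (Gfam k t)) C) (hcard : C.card ≤ k) :
    C.card = k ∧ C ∈ Gfam k t := by
  classical
  have hCF : IsBlocking (Gfam k t) C := fun B hB => hC B (Or.inl hB)
  have hCT : IsBlocking (transversals (Gfam k t)) C := fun B hB => hC B (Or.inr hB)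
  obtain ⟨m, hm, hfull⟩ := blocksT ht hk hCT
  have hmeet : ∀ r, 1 ≤ r → r ≤ k - sz k t m → (C ∩ cls k t ((m + r) % t)).Nonempty := by
    intro r h1 h2
    by_contra hemp
    have hemp' : ∀ x ∈ cls k t ((m + r) % t), x ∉ C := by
      intro x hx hxC
      exact hemp ⟨x, Finset.mem_inter.2 ⟨hxC, hx⟩⟩
    obtain ⟨s, hs1, hs2, hsub⟩ := block_avoid ht hk hCF (mod_lt' ht _) hemp'
    have heq : ((m + r) % t + s) % t = m := full_unique ht hk hcard hsub hfull
    exact arc_asym ht hk hm h1 h2 rfl ⟨s, hs1, hs2, heq⟩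
  have hch : ∀ r, ∃ p : ℕ × ℕ, p ∈ cls k t ((m + r) % t) ∧
      (1 ≤ r → r ≤ k - sz k t m → p ∈ C) := by
    intro r
    by_cases hr : 1 ≤ r ∧ r ≤ k - sz k t m
    · obtain ⟨p, hp⟩ := hmeet r hr.1 hr.2
      rw [Finset.mem_inter] at hp
      exact ⟨p, hp.2, fun _ _ => hp.1⟩
    · exact ⟨((m + r) % t, 0), base_mem_cls ht (by omega) _,
        fun h1 h2 => absurd ⟨h1, h2⟩ hr⟩
  choose g hg1 hg2 using hch
  have hB' : cls k t m ∪ Finset.image g (Finset.Icc 1 (k - sz k t m)) ∈ Gfam k t :=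
    mem_Gfam.2 ⟨m, hm, g, fun i _ _ => hg1 i, rfl⟩
  have hB'card := Gfam_uniform ht hk _ hB'
  have hB'sub : cls k t m ∪ Finset.image g (Finset.Icc 1 (k - sz k t m)) ⊆ C := by
    apply Finset.union_subset hfull
    intro x hx
    rw [Finset.mem_image] at hx
    obtain ⟨i, hi, rfl⟩ := hx
    rw [Finset.mem_Icc] at hi
    exact hg2 i hi.1 hi.2
  have hkC : k ≤ C.card := hB'card ▸ Finset.card_le_card hB'sub
  have hCeq := Finset.eq_of_subset_of_card_le hB'sub (by omega)
  rw [← hCeq]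
  exact ⟨by omega, hB'⟩

lemma block_blocks_union (ht : 1 ≤ t) (hk : t + 1 ≤ k) {B : Finset (ℕ × ℕ)}
    (hB : B ∈ Gfam k t) : IsBlocking (Gfam k t ∪ transversals (Gfam k t)) B := by
  intro B' hB'
  rcases hB' with h | h
  · exact Gfam_intersecting ht hk B' h B hB
  · obtain ⟨n, hn, g, hg, rfl⟩ := mem_Gfam.1 hB
    have h2 := (transversal_struct ht hk h).2 n hn
    have h3 : (B' ∩ cls k t n).Nonempty := Finset.card_pos.1 (by omega)
    obtain ⟨x, hx⟩ := h3
    rw [Finset.mem_inter] at hx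
    exact ⟨x, hx.1, Finset.mem_union_left _ hx.2⟩

lemma tau_union (ht : 1 ≤ t) (hk : t + 1 ≤ k) :
    tau (Gfam k t ∪ transversals (Gfam k t)) = k := by
  obtain ⟨B, hB⟩ := Gfam_nonempty ht hk
  have hmem : k ∈ {n | ∃ C : Finset (ℕ × ℕ), C.card = n ∧
      IsBlocking (Gfam k t ∪ transversals (Gfam k t)) C} :=
    ⟨B, Gfam_uniform ht hk B hB, block_blocks_union ht hk hB⟩
  apply le_antisymm
  · exact Nat.sInf_le hmem
  · apply le_csInf ⟨k, hmem⟩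
    rintro b ⟨C, hCc, hCb⟩
    by_contra hb
    push_neg at hb
    have := (union_blocking_count ht hk hCb (by omega)).1
    omega

lemma Gfam_closed (ht : 1 ≤ t) (hk : t + 1 ≤ k) :
    Gfam k t = transversals (Gfam k t ∪ transversals (Gfam k t)) := by
  apply Set.eq_of_subset_of_subset
  · intro B hB
    exact ⟨block_blocks_union ht hk hB, by
      rw [tau_union ht hk]; exact Gfam_uniform ht hk B hB⟩
  · intro C hC
    obtain ⟨hb, hc⟩ := hC
    rw [tau_union ht hk] at hc
    exact (union_blocking_count ht hk hb (le_of_eq hc)).2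

end Closure
theorem stmt_14 (k t : ℕ) (ht : 1 ≤ t) (hk : t + 1 ≤ k) :
    CIF (Gfam k t) k t ∧
    ∀ T ∈ transversals (Gfam k t), ∀ n < t, (T ∩ cls k t n).card = 1 := by
  refine ⟨⟨Gfam_uniform ht hk, Gfam_intersecting ht hk, tau_Gfam ht hk, by omega,
    Gfam_closed ht hk⟩, ?_⟩
  intro T hT n hn
  exact (transversal_struct ht hk hT).2 n hn
end

section
/- Let M(k) be the maximum size of a maximal intersecting family of k-sets. Then for k ≥ t+1: if t = 2r−1, M(k) ≥ (2r−1)(k−r+1)^{r−1} + (k−r+1)^{2r−1}·M(k−2r+1); and if t = 2r, M(k) ≥ 2r(k−r)^{r−1} + (k−r)^r(k−r+1)^r·M(k−2r). -/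
open Finset

variable {α : Type*} {β : Type*}

/-- `M k`: the maximum number of blocks in a maximal intersecting family of `k`-sets. -/
noncomputable def M (k : ℕ) : ℕ :=
  sSup {n : ℕ | ∃ F : Set (Finset ℕ), MIF F k ∧ F.ncard = n}
section Basic
variable {α : Type*}

lemma tau_le_blocking {F : Set (Finset α)} {C : Finset α} (h : IsBlocking F C) :
    tau F ≤ C.card :=
  Nat.sInf_le ⟨C, rfl, h⟩

lemma MIF.nonempty {F : Set (Finset α)} {k : ℕ} (h : MIF F k) : F.Nonempty := by
  rcases Set.eq_empty_or_nonempty F with he | hne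
  · exfalso
    have h3 := h.2.2
    rw [he] at h3
    have : (∅ : Finset α) ∈ transversals (∅ : Set (Finset α)) := by
      constructor
      · intro B hB; exact absurd hB (Set.notMem_empty _)
      · have : (0:ℕ) ∈ {n | ∃ C : Finset α, C.card = n ∧ IsBlocking (∅ : Set (Finset α)) C} :=
          ⟨∅, rfl, fun B hB => absurd hB (Set.notMem_empty _)⟩
        have h0 : tau (∅ : Set (Finset α)) = 0 := Nat.le_antisymm (Nat.sInf_le this) (Nat.zero_le _)
        simp [h0]
    rw [← h3] at this
    exact Set.notMem_empty _ this
  · exact hne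

lemma MIF.tau_eq {F : Set (Finset α)} {k : ℕ} (h : MIF F k) : tau F = k := by
  obtain ⟨B, hB⟩ := h.nonempty
  have h1 : B.card = k := h.1 B hB
  have h2 : B ∈ transversals F := h.2.2 ▸ hB
  rw [← h2.2, h1]

lemma MIF.blocking_mem {F : Set (Finset α)} {k : ℕ} (h : MIF F k) {B : Finset α}
    (hB : B ∈ F) : IsBlocking F B := ((h.2.2 ▸ hB : B ∈ transversals F)).1

lemma MIF.intersecting {F : Set (Finset α)} {k : ℕ} (h : MIF F k) : FamIntersecting F := by
  intro A hA B hB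
  exact (h.blocking_mem hB) A hA

lemma MIF.mem_of_blocking {F : Set (Finset α)} {k : ℕ} (h : MIF F k) {C : Finset α}
    (hC : IsBlocking F C) (hcard : C.card = k) : C ∈ F := by
  rw [h.2.2]; exact ⟨hC, by rw [hcard, h.tau_eq]⟩

end Basic
section Bdd
attribute [local instance] Classical.propDecidable

variable {α : Type*} [DecidableEq α]

noncomputable def NT (F : Set (Finset α)) (pickB : Finset α → Finset α) : ℕ → Finset (Finset α)
  | 0 => {∅}
  | (i+1) => (NT F pickB i).biUnion fun W =>
      if IsBlocking F W then {W} else (pickB W).image (fun x => insert x W)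

noncomputable def gseq (F : Set (Finset α)) (pickB : Finset α → Finset α) (C : Finset α) :
    ℕ → Finset α
  | 0 => ∅
  | (i+1) =>
      if IsBlocking F (gseq F pickB C i) then gseq F pickB C i
      else if h : ∃ x, x ∈ pickB (gseq F pickB C i) ∧ x ∈ C then
        insert h.choose (gseq F pickB C i) else gseq F pickB C i

lemma MIF.card_pos {F : Set (Finset α)} {k : ℕ} (h : MIF F k) : 1 ≤ k := by
  by_contra hk
  obtain ⟨B, hB⟩ := h.nonempty
  obtain ⟨x, hx, -⟩ := h.blocking_mem hB B hB
  have hB0 : B.card = k := h.1 B hB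
  have : B = ∅ := Finset.card_eq_zero.mp (by omega)
  exact absurd hx (this ▸ Finset.notMem_empty x)

lemma MIF.ncard_le {F : Set (Finset α)} {k : ℕ} (h : MIF F k) : F.ncard ≤ k ^ k := by
  have hk1 : 1 ≤ k := h.card_pos
  -- the picking function
  have hex : ∀ W : Finset α, ∃ B, ¬ IsBlocking F W → B ∈ F ∧ ∀ x ∈ B, x ∉ W := by
    intro W
    by_cases hb : IsBlocking F W
    · exact ⟨∅, fun h' => absurd hb h'⟩
    · unfold IsBlocking at hb
      push_neg at hb
      obtain ⟨B, hB1, hB2⟩ := hb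
      exact ⟨B, fun _ => ⟨hB1, hB2⟩⟩
  choose pickB hpickB using hex
  -- cardinality of the tree levels
  have hNcard : ∀ i, (NT F pickB i).card ≤ k ^ i := by
    intro i
    induction i with
    | zero => simp [NT]
    | succ i ih =>
        rw [NT]
        refine le_trans (Finset.card_biUnion_le) ?_
        refine le_trans (Finset.sum_le_sum (g := fun _ => k) ?_) ?_
        · intro W hW
          by_cases hb : IsBlocking F W
          · simp [hb, hk1]
          · simp only [hb, if_false]
            refine le_trans Finset.card_image_le ?_
            rw [(h.1 _ (hpickB W hb).1)]
        · rw [Finset.sum_const, smul_eq_mul, pow_succ]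
          exact Nat.mul_le_mul_right k ih
  -- every member of F appears at level k
  have hmem : ∀ C ∈ F, C ∈ NT F pickB k := by
    intro C hC
    have hCb : IsBlocking F C := h.blocking_mem hC
    have hCk : C.card = k := h.1 C hC
    have key : ∀ i, gseq F pickB C i ∈ NT F pickB i ∧ gseq F pickB C i ⊆ C ∧
        (IsBlocking F (gseq F pickB C i) ∨ (gseq F pickB C i).card = i) := by
      intro i
      induction i with
      | zero => refine ⟨by simp [gseq, NT], by simp [gseq], Or.inr (by simp [gseq])⟩
      | succ i ih =>
          obtain ⟨ih1, ih2, ih3⟩ := ih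
          set W := gseq F pickB C i with hW
          by_cases hb : IsBlocking F W
          · have hg : gseq F pickB C (i+1) = W := by rw [gseq, ← hW, if_pos hb]
            refine ⟨?_, hg ▸ ih2, Or.inl (hg ▸ hb)⟩
            rw [hg, NT]
            refine Finset.mem_biUnion.2 ⟨W, ih1, ?_⟩
            rw [if_pos hb]
            exact Finset.mem_singleton_self W
          · have hcW : W.card = i := ih3.resolve_left hb
            have hBW := hpickB W hb
            have hxex : ∃ x, x ∈ pickB W ∧ x ∈ C := by
              obtain ⟨x, hx1, hx2⟩ := hCb (pickB W) hBW.1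
              exact ⟨x, hx1, hx2⟩
            have hg : gseq F pickB C (i+1) = insert hxex.choose W := by
              rw [gseq, ← hW, if_neg hb, dif_pos hxex]
            have hx := hxex.choose_spec
            have hxnW : hxex.choose ∉ W := hBW.2 _ hx.1
            refine ⟨?_, ?_, Or.inr ?_⟩
            · rw [hg, NT]
              refine Finset.mem_biUnion.2 ⟨W, ih1, ?_⟩
              simp only [hb, if_false]
              exact Finset.mem_image.2 ⟨_, hx.1, rfl⟩
            · rw [hg]
              exact Finset.insert_subset hx.2 ih2
            · rw [hg, Finset.card_insert_of_notMem hxnW, hcW]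
    obtain ⟨h1, h2, h3⟩ := key k
    have hcard : (gseq F pickB C k).card = k := by
      rcases h3 with hb | hc
      · have := tau_le_blocking hb
        rw [h.tau_eq] at this
        have := Finset.card_le_card h2
        omega
      · exact hc
    have : gseq F pickB C k = C := Finset.eq_of_subset_of_card_le h2 (by omega)
    exact this ▸ h1
  have hsub : F ⊆ ↑(NT F pickB k) := fun C hC => hmem C hC
  calc F.ncard ≤ (↑(NT F pickB k) : Set (Finset α)).ncard :=
        Set.ncard_le_ncard hsub (NT F pickB k).finite_toSet
    _ = (NT F pickB k).card := Set.ncard_coe_finset _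
    _ ≤ k ^ k := hNcard k

lemma bddAboveS (k : ℕ) :
    BddAbove {n : ℕ | ∃ F : Set (Finset ℕ), MIF F k ∧ F.ncard = n} := by
  refine ⟨k ^ k, fun n hn => ?_⟩
  obtain ⟨F, hF, rfl⟩ := hn
  exact hF.ncard_le

end Bdd
section Exist

/-- The family of all `m`-subsets of a `(2m-1)`-set. -/
def Kfam (m : ℕ) : Set (Finset ℕ) := ↑((Finset.range (2*m-1)).powersetCard m)

lemma Kfam_mem {m : ℕ} {B : Finset ℕ} :
    B ∈ Kfam m ↔ B ⊆ Finset.range (2*m-1) ∧ B.card = m := by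
  simp [Kfam, Finset.mem_powersetCard]

lemma Kfam_avoid {m : ℕ} (hm : 1 ≤ m) {C : Finset ℕ}
    (hC : (C ∩ Finset.range (2*m-1)).card + 1 ≤ m) :
    ∃ B ∈ Kfam m, ∀ x ∈ B, x ∉ C := by
  have hD : m ≤ ((Finset.range (2*m-1)) \ C).card := by
    have h1 : (Finset.range (2*m-1)) \ (C ∩ Finset.range (2*m-1)) = (Finset.range (2*m-1)) \ C :=
      by rw [Finset.inter_comm]; exact Finset.sdiff_inter_self_left _ _
    rw [← h1, Finset.card_sdiff_of_subset Finset.inter_subset_right, Finset.card_range]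
    omega
  obtain ⟨B, hB1, hB2⟩ := Finset.exists_subset_card_eq hD
  refine ⟨B, Kfam_mem.2 ⟨hB1.trans (Finset.sdiff_subset), hB2⟩, ?_⟩
  intro x hx hxC
  have := hB1 hx
  rw [Finset.mem_sdiff] at this
  exact this.2 hxC

lemma Kfam_MIF {m : ℕ} (hm : 1 ≤ m) : MIF (Kfam m) m := by
  have hinter : ∀ A ∈ Kfam m, ∀ B ∈ Kfam m, ∃ x ∈ A, x ∈ B := by
    intro A hA B hB
    rw [Kfam_mem] at hA hB
    have hU : (A ∪ B).card ≤ 2*m-1 := by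
      refine le_trans (Finset.card_le_card (Finset.union_subset hA.1 hB.1)) ?_
      simp
    have hI := Finset.card_union_add_card_inter A B
    have hA2 := hA.2
    have hB2 := hB.2
    obtain ⟨x, hx⟩ := Finset.card_pos.mp (show 0 < (A ∩ B).card by omega)
    rw [Finset.mem_inter] at hx
    exact ⟨x, hx.1, hx.2⟩
  have hblock : ∀ C : Finset ℕ, IsBlocking (Kfam m) C → m ≤ C.card := by
    intro C hC
    by_contra hlt
    have h1 : (C ∩ Finset.range (2*m-1)).card + 1 ≤ m := by
      have := Finset.card_le_card (Finset.inter_subset_left (s₁ := C) (s₂ := Finset.range (2*m-1)))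
      omega
    obtain ⟨B, hB, hBC⟩ := Kfam_avoid hm h1
    obtain ⟨x, hx1, hx2⟩ := hC B hB
    exact hBC x hx1 hx2
  have hB0 : Finset.range m ∈ Kfam m := by
    rw [Kfam_mem]
    exact ⟨Finset.range_subset_range.2 (by omega), Finset.card_range m⟩
  have htau : tau (Kfam m) = m := by
    refine le_antisymm ?_ ?_
    · have hbl0 : IsBlocking (Kfam m) (Finset.range m) := fun B hB => hinter B hB _ hB0
      exact le_trans (tau_le_blocking hbl0) (le_of_eq (Finset.card_range m))
    · have hne : Set.Nonempty {n | ∃ C : Finset ℕ, C.card = n ∧ IsBlocking (Kfam m) C} :=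
        ⟨m, Finset.range m, Finset.card_range m, fun B hB => hinter B hB _ hB0⟩
      obtain ⟨C, hC1, hC2⟩ := Nat.sInf_mem hne
      rw [tau, ← hC1]
      exact hblock C hC2
  constructor
  · intro B hB; exact (Kfam_mem.1 hB).2
  constructor
  · exact ⟨Finset.range m, fun B hB => hinter B hB _ hB0⟩
  · ext C
    rw [Kfam_mem]
    constructor
    · rintro ⟨hsub, hcard⟩
      refine ⟨fun B hB => hinter B hB C (Kfam_mem.2 ⟨hsub, hcard⟩), by rw [hcard, htau]⟩
    · rintro ⟨hbl, hcard⟩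
      rw [htau] at hcard
      refine ⟨?_, hcard⟩
      by_contra hns
      have h1 : (C ∩ Finset.range (2*m-1)).card + 1 ≤ m := by
        have hlt : (C ∩ Finset.range (2*m-1)).card < C.card := by
          refine Finset.card_lt_card ?_
          rw [Finset.ssubset_iff_of_subset (Finset.inter_subset_left)]
          obtain ⟨x, hx1, hx2⟩ : ∃ x ∈ C, x ∉ Finset.range (2*m-1) := by
            by_contra hh; push_neg at hh; exact hns fun x hx => hh x hx
          exact ⟨x, hx1, fun hmem => hx2 (Finset.mem_inter.1 hmem).2⟩
        omega
      obtain ⟨B, hB, hBC⟩ := Kfam_avoid hm h1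
      obtain ⟨x, hx1, hx2⟩ := hbl B hB
      exact hBC x hx1 hx2

end Exist
section Attain

lemma Sset_nonempty {m : ℕ} (hm : 1 ≤ m) :
    Set.Nonempty {n : ℕ | ∃ F : Set (Finset ℕ), MIF F m ∧ F.ncard = n} :=
  ⟨(Kfam m).ncard, Kfam m, Kfam_MIF hm, rfl⟩

lemma M_attained {m : ℕ} (hm : 1 ≤ m) : ∃ F : Set (Finset ℕ), MIF F m ∧ F.ncard = M m :=
  Nat.sSup_mem (Sset_nonempty hm) (bddAboveS m)

lemma le_M {m : ℕ} {F : Set (Finset ℕ)} (hF : MIF F m) : F.ncard ≤ M m :=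
  le_csSup (bddAboveS m) ⟨F, hF, rfl⟩

lemma M_pos {m : ℕ} (hm : 1 ≤ m) : 1 ≤ M m := by
  have h1 : 1 ≤ (Kfam m).ncard := by
    rw [Kfam, Set.ncard_coe_finset, Finset.card_powersetCard, Finset.card_range]
    exact Nat.choose_pos (by omega)
  exact le_trans h1 (le_M (Kfam_MIF hm))

end Attain

section Map
variable {α β : Type*} [DecidableEq α] [DecidableEq β] {f : α → β}

lemma isBlocking_image {F : Set (Finset α)} {C : Finset α} (h : IsBlocking F C) :
    IsBlocking ((Finset.image f) '' F) (C.image f) := by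
  rintro B' ⟨B, hB, rfl⟩
  obtain ⟨x, hx1, hx2⟩ := h B hB
  exact ⟨f x, Finset.mem_image_of_mem f hx1, Finset.mem_image_of_mem f hx2⟩

lemma blocking_preimage (hf : Function.Injective f) {F : Set (Finset α)} {C : Finset β}
    (h : IsBlocking ((Finset.image f) '' F) C) :
    IsBlocking F (C.preimage f hf.injOn) := by
  intro B hB
  obtain ⟨y, hy1, hy2⟩ := h (B.image f) ⟨B, hB, rfl⟩
  obtain ⟨x, hx, rfl⟩ := Finset.mem_image.1 hy1
  exact ⟨x, hx, Finset.mem_preimage.2 hy2⟩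

lemma tau_image (hf : Function.Injective f) {F : Set (Finset α)} (hFB : HasBlocking F) :
    tau ((Finset.image f) '' F) = tau F := by
  obtain ⟨C0, hC0⟩ := hFB
  have hne : Set.Nonempty {n | ∃ C : Finset α, C.card = n ∧ IsBlocking F C} :=
    ⟨C0.card, C0, rfl, hC0⟩
  refine le_antisymm ?_ ?_
  · obtain ⟨D, hD1, hD2⟩ := Nat.sInf_mem hne
    refine le_trans (tau_le_blocking (isBlocking_image hD2)) ?_
    rw [Finset.card_image_of_injective _ hf]
    exact le_of_eq hD1
  · have hne2 : Set.Nonempty {n | ∃ C : Finset β, C.card = n ∧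
        IsBlocking ((Finset.image f) '' F) C} :=
      ⟨(C0.image f).card, C0.image f, rfl, isBlocking_image hC0⟩
    obtain ⟨D, hD1, hD2⟩ := Nat.sInf_mem hne2
    refine le_trans (tau_le_blocking (blocking_preimage hf hD2)) ?_
    rw [tau, ← hD1]
    exact Finset.card_le_card_of_injOn f (fun x hx => Finset.mem_preimage.1 hx) hf.injOn

lemma transversals_image (hf : Function.Injective f) {F : Set (Finset α)} (hFB : HasBlocking F) :
    transversals ((Finset.image f) '' F) = (Finset.image f) '' transversals F := by
  ext C
  constructor
  · rintro ⟨hbl, hcard⟩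
    rw [tau_image hf hFB] at hcard
    set D := C.preimage f hf.injOn with hD
    have hDbl := blocking_preimage hf hbl
    have hDle : D.card ≤ C.card :=
      Finset.card_le_card_of_injOn f (fun x hx => Finset.mem_preimage.1 hx) hf.injOn
    have hDge : tau F ≤ D.card := tau_le_blocking hDbl
    have hDcard : D.card = tau F := by omega
    have hsub : D.image f ⊆ C := by
      intro y hy
      obtain ⟨x, hx, rfl⟩ := Finset.mem_image.1 hy
      exact Finset.mem_preimage.1 hx
    have himcard : (D.image f).card = C.card := by
      rw [Finset.card_image_of_injective _ hf]; omega
    have : D.image f = C := Finset.eq_of_subset_of_card_le hsub (le_of_eq himcard.symm)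
    exact ⟨D, ⟨hDbl, hDcard⟩, this⟩
  · rintro ⟨D, ⟨hDbl, hDcard⟩, rfl⟩
    refine ⟨isBlocking_image hDbl, ?_⟩
    rw [Finset.card_image_of_injective _ hf, tau_image hf hFB, hDcard]

lemma MIF_image (hf : Function.Injective f) {F : Set (Finset α)} {k : ℕ} (h : MIF F k) :
    MIF ((Finset.image f) '' F) k := by
  refine ⟨?_, ?_, ?_⟩
  · rintro B' ⟨B, hB, rfl⟩
    rw [Finset.card_image_of_injective _ hf]
    exact h.1 B hB
  · obtain ⟨C, hC⟩ := h.2.1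
    exact ⟨C.image f, isBlocking_image hC⟩
  · rw [transversals_image hf h.2.1, ← h.2.2]

lemma exists_even_MIF {m : ℕ} (hm : 1 ≤ m) :
    ∃ H : Set (Finset ℕ), MIF H m ∧ H.ncard = M m ∧ ∀ A ∈ H, ∀ x ∈ A, Even x := by
  obtain ⟨F, hF, hFcard⟩ := M_attained hm
  have hf : Function.Injective (fun x : ℕ => 2 * x) := fun a b h => by dsimp only at h; omega
  refine ⟨(Finset.image (fun x => 2 * x)) '' F, MIF_image hf hF, ?_, ?_⟩
  · rw [Set.ncard_image_of_injective F (Finset.image_injective hf), hFcard]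
  · rintro A ⟨B, hB, rfl⟩ x hx
    obtain ⟨y, -, rfl⟩ := Finset.mem_image.1 hx
    exact ⟨y, by omega⟩

end Map
section Gadget
attribute [local instance] Classical.propDecidable

variable (k t : ℕ) (S : Fin t → Finset (Fin t))

/-- Size of class `j`. -/
def nsz (j : Fin t) : ℕ := k - (S j).card

/-- The classes of points (all odd numbers). -/
def Pcl (i : Fin t) : Finset ℕ :=
  (Finset.range (nsz k t S i)).image (fun x => 2 * ((i : ℕ) * k + x) + 1)

lemma mem_Pcl {i : Fin t} {x : ℕ} :
    x ∈ Pcl k t S i ↔ ∃ a < nsz k t S i, x = 2 * ((i : ℕ) * k + a) + 1 := by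
  simp [Pcl, eq_comm]

lemma Pcl_odd {i : Fin t} {x : ℕ} (hx : x ∈ Pcl k t S i) : ¬ Even x := by
  obtain ⟨a, -, rfl⟩ := (mem_Pcl k t S).1 hx
  simp [Nat.even_add_one, parity_simps]

lemma card_Pcl (i : Fin t) : (Pcl k t S i).card = nsz k t S i := by
  rw [Pcl, Finset.card_image_of_injective _ (fun a b h => by omega), Finset.card_range]

lemma nsz_le (i : Fin t) : nsz k t S i ≤ k := Nat.sub_le _ _

lemma Pcl_disj {i j : Fin t} (hij : i ≠ j) {x : ℕ}
    (hxi : x ∈ Pcl k t S i) (hxj : x ∈ Pcl k t S j) : False := by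
  obtain ⟨a, ha, rfl⟩ := (mem_Pcl k t S).1 hxi
  obtain ⟨b, hb, he⟩ := (mem_Pcl k t S).1 hxj
  have ha' : a < k := lt_of_lt_of_le ha (nsz_le k t S i)
  have hb' : b < k := lt_of_lt_of_le hb (nsz_le k t S j)
  have hne : (i : ℕ) ≠ (j : ℕ) := fun h => hij (Fin.ext h)
  have : (i : ℕ) * k + a = (j : ℕ) * k + b := by omega
  rcases Nat.lt_or_ge (i : ℕ) (j : ℕ) with h | h
  · have h1 : ((i : ℕ) + 1) * k ≤ (j : ℕ) * k := Nat.mul_le_mul_right k h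
    have h2 : ((i : ℕ) + 1) * k = (i : ℕ) * k + k := by ring
    omega
  · have h' : (j : ℕ) < (i : ℕ) := by omega
    have h1 : ((j : ℕ) + 1) * k ≤ (i : ℕ) * k := Nat.mul_le_mul_right k h'
    have h2 : ((j : ℕ) + 1) * k = (j : ℕ) * k + k := by ring
    omega

/-- Choice sets for blocks of type `i`. -/
def Dfin (i : Fin t) : Fin t → Finset ℕ := fun j => if j ∈ S i then Pcl k t S j else {0}

/-- Blocks of type `i`. -/
def GtypeF (i : Fin t) : Finset (Finset ℕ) :=
  (Fintype.piFinset (Dfin k t S i)).image (fun g => Pcl k t S i ∪ (S i).image g)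

/-- All blocks of the base family. -/
def GF : Finset (Finset ℕ) := Finset.univ.biUnion (fun i => GtypeF k t S i)

/-- The family of systems of distinct representatives. -/
def TF : Finset (Finset ℕ) :=
  (Fintype.piFinset (fun j => Pcl k t S j)).image (fun g => Finset.univ.image g)

def mixedF (Hfin : Finset (Finset ℕ)) : Finset (Finset ℕ) :=
  (TF k t S ×ˢ Hfin).image (fun p => p.1 ∪ p.2)

def FF (Hfin : Finset (Finset ℕ)) : Finset (Finset ℕ) := GF k t S ∪ mixedF k t S Hfin

lemma mem_GtypeF {i : Fin t} {B : Finset ℕ} :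
    B ∈ GtypeF k t S i ↔
      ∃ g : Fin t → ℕ, (∀ j ∈ S i, g j ∈ Pcl k t S j) ∧ B = Pcl k t S i ∪ (S i).image g := by
  constructor
  · rw [GtypeF, Finset.mem_image]
    rintro ⟨g, hg, rfl⟩
    rw [Fintype.mem_piFinset] at hg
    refine ⟨g, fun j hj => ?_, rfl⟩
    have := hg j
    rwa [Dfin, if_pos hj] at this
  · rintro ⟨g, hg, rfl⟩
    rw [GtypeF, Finset.mem_image]
    refine ⟨fun j => if j ∈ S i then g j else 0, ?_, ?_⟩
    · rw [Fintype.mem_piFinset]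
      intro j
      rw [Dfin]
      by_cases hj : j ∈ S i
      · rw [if_pos hj, if_pos hj]; exact hg j hj
      · rw [if_neg hj, if_neg hj]; exact Finset.mem_singleton_self 0
    · congr 1
      refine Finset.image_congr ?_
      intro j hj
      simp only [Finset.mem_coe] at hj
      simp [hj]

lemma mem_TF {C : Finset ℕ} :
    C ∈ TF k t S ↔
      ∃ g : Fin t → ℕ, (∀ j, g j ∈ Pcl k t S j) ∧ C = Finset.univ.image g := by
  rw [TF, Finset.mem_image]
  constructor
  · rintro ⟨g, hg, rfl⟩
    exact ⟨g, Fintype.mem_piFinset.1 hg, rfl⟩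
  · rintro ⟨g, hg, rfl⟩
    exact ⟨g, Fintype.mem_piFinset.2 hg, rfl⟩

end Gadget
section Gadget2
attribute [local instance] Classical.propDecidable

variable {k t : ℕ} {S : Fin t → Finset (Fin t)}

lemma not_mem_self (hanti : ∀ i j, j ∈ S i → i ∉ S j) (i : Fin t) : i ∉ S i :=
  fun h => hanti i i h h

lemma Pcl_two (h2 : ∀ i, (S i).card + 2 ≤ k) (i : Fin t) : 2 ≤ (Pcl k t S i).card := by
  rw [card_Pcl, nsz]
  have := h2 i
  omega

lemma Pcl_nonempty (h2 : ∀ i, (S i).card + 2 ≤ k) (i : Fin t) : (Pcl k t S i).Nonempty :=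
  Finset.card_pos.mp (by have := Pcl_two (S := S) h2 i; omega)

lemma card_GtypeF (hanti : ∀ i j, j ∈ S i → i ∉ S j) (i : Fin t) :
    (GtypeF k t S i).card = ∏ j ∈ S i, nsz k t S j := by
  rw [GtypeF, Finset.card_image_of_injOn, Fintype.card_piFinset]
  · have h1 : ∀ j, (Dfin k t S i j).card = if j ∈ S i then nsz k t S j else 1 := by
      intro j
      rw [Dfin]
      by_cases hj : j ∈ S i
      · rw [if_pos hj, if_pos hj, card_Pcl]
      · rw [if_neg hj, if_neg hj, Finset.card_singleton]
    calc ∏ j, (Dfin k t S i j).card = ∏ j, if j ∈ S i then nsz k t S j else 1 := by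
          exact Finset.prod_congr rfl (fun j _ => h1 j)
      _ = ∏ j ∈ Finset.univ ∩ S i, nsz k t S j := Finset.prod_ite_mem _ _ _
      _ = ∏ j ∈ S i, nsz k t S j := by rw [Finset.univ_inter]
  · intro g hg g' hg' heq
    dsimp only at heq
    simp only [Finset.mem_coe, Fintype.mem_piFinset] at hg hg'
    funext j
    by_cases hj : j ∈ S i
    · have hgj : g j ∈ Pcl k t S j := by have := hg j; rwa [Dfin, if_pos hj] at this
      have hmem : g j ∈ Pcl k t S i ∪ (S i).image g' := by
        rw [← heq]
        exact Finset.mem_union_right _ (Finset.mem_image.2 ⟨j, hj, rfl⟩)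
      rcases Finset.mem_union.1 hmem with h | h
      · have hij : j ≠ i := fun h' => not_mem_self hanti i (h' ▸ hj)
        exact absurd (Pcl_disj k t S hij hgj h) (fun f => f)
      · obtain ⟨l, hl, hle⟩ := Finset.mem_image.1 h
        have hgl : g' l ∈ Pcl k t S l := by have := hg' l; rwa [Dfin, if_pos hl] at this
        by_cases hlj : l = j
        · rw [← hle, hlj]
        · exact absurd (Pcl_disj k t S (Ne.symm hlj) hgj (hle ▸ hgl)) (fun f => f)
    · have h1 : g j ∈ ({0} : Finset ℕ) := by have := hg j; rwa [Dfin, if_neg hj] at this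
      have h2 : g' j ∈ ({0} : Finset ℕ) := by have := hg' j; rwa [Dfin, if_neg hj] at this
      rw [Finset.mem_singleton.1 h1, Finset.mem_singleton.1 h2]

lemma GtypeF_disjoint (h2 : ∀ i, (S i).card + 2 ≤ k) {i j : Fin t} (hij : i ≠ j)
    {B : Finset ℕ} (hBi : B ∈ GtypeF k t S i) (hBj : B ∈ GtypeF k t S j) : False := by
  obtain ⟨g, hg, rfl⟩ := (mem_GtypeF k t S).1 hBi
  obtain ⟨g', hg', heq⟩ := (mem_GtypeF k t S).1 hBj
  have hsub : Pcl k t S j ⊆ Pcl k t S i ∪ (S i).image g := by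
    rw [heq]; exact Finset.subset_union_left
  obtain ⟨x, hx, y, hy, hxy⟩ := Finset.one_lt_card.mp (Pcl_two (S := S) h2 j)
  have hmem : ∀ z ∈ Pcl k t S j, z = g j ∨ False := by
    intro z hz
    rcases Finset.mem_union.1 (hsub hz) with h | h
    · exact Or.inr (Pcl_disj k t S (Ne.symm hij) hz h)
    · obtain ⟨l, hl, hle⟩ := Finset.mem_image.1 h
      have hgl : g l ∈ Pcl k t S l := hg l hl
      by_cases hlj : l = j
      · exact Or.inl (by rw [← hle, hlj])
      · exact Or.inr (Pcl_disj k t S (Ne.symm hlj) hz (hle ▸ hgl))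
  rcases hmem x hx with h1 | h1
  · rcases hmem y hy with h2' | h2'
    · exact hxy (h1.trans h2'.symm)
    · exact h2'
  · exact h1

lemma card_GF (hanti : ∀ i j, j ∈ S i → i ∉ S j) (h2 : ∀ i, (S i).card + 2 ≤ k) :
    (GF k t S).card = ∑ i : Fin t, ∏ j ∈ S i, nsz k t S j := by
  rw [GF, Finset.card_biUnion]
  · exact Finset.sum_congr rfl (fun i _ => card_GtypeF hanti i)
  · intro i _ j _ hij
    rw [Function.onFun, Finset.disjoint_left]
    intro B hBi hBj
    exact GtypeF_disjoint h2 hij hBi hBj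

lemma card_TF : (TF k t S).card = ∏ j : Fin t, nsz k t S j := by
  rw [TF, Finset.card_image_of_injOn, Fintype.card_piFinset]
  · exact Finset.prod_congr rfl (fun j _ => card_Pcl k t S j)
  · intro g hg g' hg' heq
    dsimp only at heq
    simp only [Finset.mem_coe, Fintype.mem_piFinset] at hg hg'
    funext j
    have hmem : g j ∈ Finset.univ.image g' := by
      rw [← heq]; exact Finset.mem_image.2 ⟨j, Finset.mem_univ j, rfl⟩
    obtain ⟨l, -, hle⟩ := Finset.mem_image.1 hmem
    by_cases hlj : l = j
    · rw [← hle, hlj]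
    · exact absurd (Pcl_disj k t S (Ne.symm hlj) (hg j) (hle ▸ hg' l)) (fun f => f)

lemma card_block (hanti : ∀ i j, j ∈ S i → i ∉ S j) (h2 : ∀ i, (S i).card + 2 ≤ k)
    {i : Fin t} {B : Finset ℕ}
    (hB : B ∈ GtypeF k t S i) : B.card = k := by
  obtain ⟨g, hg, rfl⟩ := (mem_GtypeF k t S).1 hB
  have hdisj : Disjoint (Pcl k t S i) ((S i).image g) := by
    rw [Finset.disjoint_left]
    intro x hx hx'
    obtain ⟨l, hl, hle⟩ := Finset.mem_image.1 hx'
    have : l ≠ i := fun h => not_mem_self hanti i (h ▸ hl)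
    exact Pcl_disj k t S this (hle ▸ hg l hl) hx
  rw [Finset.card_union_of_disjoint hdisj, card_Pcl,
    Finset.card_image_of_injOn, nsz]
  · have := h2 i
    omega
  · intro a ha b hb hab
    by_contra hne
    exact Pcl_disj k t S (fun h => hne h) (hg a ha) (hab ▸ hg b hb)

lemma card_sdr {C : Finset ℕ} (hC : C ∈ TF k t S) : C.card = t := by
  obtain ⟨g, hg, rfl⟩ := (mem_TF k t S).1 hC
  rw [Finset.card_image_of_injOn, Finset.card_univ, Fintype.card_fin]
  intro a _ b _ hab
  by_contra hne
  exact Pcl_disj k t S (fun h => hne h) (hg a) (hab ▸ hg b)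

/-- All class points. -/
def allP (k t : ℕ) (S : Fin t → Finset (Fin t)) : Finset ℕ :=
  Finset.univ.biUnion (fun i => Pcl k t S i)

lemma allP_odd {x : ℕ} (hx : x ∈ allP k t S) : ¬ Even x := by
  obtain ⟨i, -, hi⟩ := Finset.mem_biUnion.1 hx
  exact Pcl_odd k t S hi

lemma block_subset_allP {i : Fin t} {B : Finset ℕ} (hB : B ∈ GtypeF k t S i) :
    B ⊆ allP k t S := by
  obtain ⟨g, hg, rfl⟩ := (mem_GtypeF k t S).1 hB
  intro x hx
  rcases Finset.mem_union.1 hx with h | h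
  · exact Finset.mem_biUnion.2 ⟨i, Finset.mem_univ i, h⟩
  · obtain ⟨l, hl, hle⟩ := Finset.mem_image.1 h
    exact Finset.mem_biUnion.2 ⟨l, Finset.mem_univ l, hle ▸ hg l hl⟩

lemma sdr_subset_allP {C : Finset ℕ} (hC : C ∈ TF k t S) : C ⊆ allP k t S := by
  obtain ⟨g, hg, rfl⟩ := (mem_TF k t S).1 hC
  intro x hx
  obtain ⟨l, -, hle⟩ := Finset.mem_image.1 hx
  exact Finset.mem_biUnion.2 ⟨l, Finset.mem_univ l, hle ▸ hg l⟩

end Gadget2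
section Gadget3
attribute [local instance] Classical.propDecidable

variable {k t : ℕ} {S : Fin t → Finset (Fin t)}

lemma cover_bound (hanti : ∀ i j, j ∈ S i → i ∉ S j)
    (h2 : ∀ i, (S i).card + 2 ≤ k) (htk : t + 1 ≤ k)
    {X : Finset ℕ} (hX : ∀ B ∈ GF k t S, ∃ x ∈ B, x ∈ X) :
    t ≤ X.card ∧ (X.card ≤ t → ∀ i, ∃ x ∈ X, x ∈ Pcl k t S i) := by
  classical
  set Touch : Finset (Fin t) :=
    Finset.univ.filter (fun i => ∃ x ∈ X, x ∈ Pcl k t S i) with hTouch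
  set Full : Finset (Fin t) :=
    Finset.univ.filter (fun l => Pcl k t S l ⊆ X) with hFull
  have step1 : ∀ i : Fin t, i ∈ Touch ∨ ∃ l ∈ S i, l ∈ Full := by
    intro i
    by_contra h
    push_neg at h
    obtain ⟨hTi, hFi⟩ := h
    have hchoice : ∀ l : Fin t, l ∈ S i → ∃ y, y ∈ Pcl k t S l ∧ y ∉ X := by
      intro l hl
      have hns : ¬ Pcl k t S l ⊆ X := by
        intro hsub
        exact hFi l hl (by rw [hFull]; exact Finset.mem_filter.2 ⟨Finset.mem_univ l, hsub⟩)
      obtain ⟨y, hy1, hy2⟩ := Finset.not_subset.1 hns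
      exact ⟨y, hy1, hy2⟩
    set g : Fin t → ℕ :=
      fun l => if h : ∃ y, y ∈ Pcl k t S l ∧ y ∉ X then h.choose else 0 with hgdef
    have hg : ∀ l ∈ S i, g l ∈ Pcl k t S l ∧ g l ∉ X := by
      intro l hl
      have he := hchoice l hl
      rw [hgdef]
      simp only [dif_pos he]
      exact he.choose_spec
    have hB : Pcl k t S i ∪ (S i).image g ∈ GF k t S :=
      Finset.mem_biUnion.2 ⟨i, Finset.mem_univ i,
        (mem_GtypeF k t S).2 ⟨g, fun l hl => (hg l hl).1, rfl⟩⟩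
    obtain ⟨x, hx1, hx2⟩ := hX _ hB
    rcases Finset.mem_union.1 hx1 with h | h
    · exact hTi (by rw [hTouch]; exact Finset.mem_filter.2 ⟨Finset.mem_univ i, ⟨x, hx2, h⟩⟩)
    · obtain ⟨l, hl, hle⟩ := Finset.mem_image.1 h
      exact (hg l hl).2 (hle ▸ hx2)
  have hFT : Full ⊆ Touch := by
    intro l hl
    rw [hFull] at hl
    obtain ⟨y, hy⟩ := Pcl_nonempty (S := S) h2 l
    exact Finset.mem_filter.2 ⟨Finset.mem_univ l, ⟨y, (Finset.mem_filter.1 hl).2 hy, hy⟩⟩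
  have hind : ∀ l : Fin t,
      (Finset.univ.filter (fun i => l ∈ S i)).card + ((S l).card + 1) ≤ t := by
    intro l
    have hsub : Finset.univ.filter (fun i => l ∈ S i) ⊆
        Finset.univ \ insert l (S l) := by
      intro x hx
      have hx' := (Finset.mem_filter.1 hx).2
      rw [Finset.mem_sdiff]
      refine ⟨Finset.mem_univ x, ?_⟩
      rw [Finset.mem_insert]
      rintro (rfl | hxl)
      · exact not_mem_self hanti x hx'
      · exact hanti x l hx' hxl
    have h1 := Finset.card_le_card hsub
    have h2' : (Finset.univ \ insert l (S l)).card = t - ((S l).card + 1) := by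
      rw [Finset.card_sdiff_of_subset (Finset.subset_univ _), Finset.card_univ, Fintype.card_fin,
        Finset.card_insert_of_notMem (not_mem_self hanti l)]
    have h3 : (S l).card + 1 ≤ t := by
      have := Finset.card_le_card (Finset.subset_univ (insert l (S l)))
      rwa [Finset.card_insert_of_notMem (not_mem_self hanti l), Finset.card_univ,
        Fintype.card_fin] at this
    omega
  have htT : t ≤ Touch.card +
      ∑ l ∈ Full, (Finset.univ.filter (fun i => l ∈ S i)).card := by
    have hsub : (Finset.univ : Finset (Fin t)) ⊆
        Touch ∪ Full.biUnion (fun l => Finset.univ.filter (fun i => l ∈ S i)) := by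
      intro i _
      rcases step1 i with h | ⟨l, hl1, hl2⟩
      · exact Finset.mem_union_left _ h
      · exact Finset.mem_union_right _
          (Finset.mem_biUnion.2 ⟨l, hl2, Finset.mem_filter.2 ⟨Finset.mem_univ i, hl1⟩⟩)
    calc t = (Finset.univ : Finset (Fin t)).card := by rw [Finset.card_univ, Fintype.card_fin]
      _ ≤ (Touch ∪ Full.biUnion (fun l => Finset.univ.filter (fun i => l ∈ S i))).card :=
          Finset.card_le_card hsub
      _ ≤ Touch.card + (Full.biUnion (fun l => Finset.univ.filter (fun i => l ∈ S i))).card :=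
          Finset.card_union_le _ _
      _ ≤ Touch.card + ∑ l ∈ Full, (Finset.univ.filter (fun i => l ∈ S i)).card :=
          Nat.add_le_add_left Finset.card_biUnion_le _
  -- pick elements for touched classes
  set pk : Fin t → ℕ :=
    fun i => if h : ∃ x, x ∈ X ∧ x ∈ Pcl k t S i then h.choose else 0 with hpkdef
  have hpk : ∀ i ∈ Touch, pk i ∈ X ∧ pk i ∈ Pcl k t S i := by
    intro i hi
    rw [hTouch] at hi
    obtain ⟨x, hx1, hx2⟩ := (Finset.mem_filter.1 hi).2
    have he : ∃ x, x ∈ X ∧ x ∈ Pcl k t S i := ⟨x, hx1, hx2⟩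
    rw [hpkdef]
    simp only [dif_pos he]
    exact he.choose_spec
  set U : Finset ℕ :=
    Touch.biUnion (fun i => if i ∈ Full then Pcl k t S i else {pk i}) with hUdef
  have hUsub : U ⊆ X := by
    intro x hx
    rw [hUdef] at hx
    obtain ⟨i, hi, hxi⟩ := Finset.mem_biUnion.1 hx
    by_cases hiF : i ∈ Full
    · rw [if_pos hiF] at hxi
      rw [hFull] at hiF
      exact (Finset.mem_filter.1 hiF).2 hxi
    · rw [if_neg hiF] at hxi
      rw [Finset.mem_singleton.1 hxi]
      exact (hpk i hi).1
  have hbranch : ∀ i ∈ Touch, (if i ∈ Full then Pcl k t S i else {pk i}) ⊆ Pcl k t S i := by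
    intro i hi
    by_cases hiF : i ∈ Full
    · rw [if_pos hiF]
    · rw [if_neg hiF]
      intro x hx
      rw [Finset.mem_singleton.1 hx]
      exact (hpk i hi).2
  have hUcard : U.card = ∑ i ∈ Touch, (if i ∈ Full then nsz k t S i else 1) := by
    rw [hUdef, Finset.card_biUnion]
    · refine Finset.sum_congr rfl (fun i hi => ?_)
      by_cases hiF : i ∈ Full
      · rw [if_pos hiF, if_pos hiF, card_Pcl]
      · rw [if_neg hiF, if_neg hiF, Finset.card_singleton]
    · intro a ha b hb hab
      rw [Function.onFun, Finset.disjoint_left]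
      intro x hxa hxb
      exact Pcl_disj k t S hab (hbranch a ha hxa) (hbranch b hb hxb)
  set D : Finset (Fin t) := Touch \ Full with hDdef
  have hsplit : ∑ i ∈ Touch, (if i ∈ Full then nsz k t S i else 1) =
      (∑ l ∈ Full, nsz k t S l) + D.card := by
    have hTu : Touch = Full ∪ D := (Finset.union_sdiff_of_subset hFT).symm
    rw [hTu, Finset.sum_union Finset.disjoint_sdiff]
    congr 1
    · exact Finset.sum_congr rfl (fun l hl => if_pos hl)
    · rw [Finset.sum_congr rfl (fun l hl => if_neg (Finset.mem_sdiff.1 (hDdef ▸ hl)).2),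
        Finset.sum_const, smul_eq_mul, mul_one]
  have hXU : (∑ l ∈ Full, nsz k t S l) + D.card ≤ X.card := by
    rw [← hsplit, ← hUcard]
    exact Finset.card_le_card hUsub
  have hptw : ∀ l ∈ Full,
      (Finset.univ.filter (fun i => l ∈ S i)).card + (k - t + 1) ≤ nsz k t S l := by
    intro l _
    have h1 := hind l
    have h3 : (S l).card + 1 ≤ t := by
      have := Finset.card_le_card (Finset.subset_univ (insert l (S l)))
      rwa [Finset.card_insert_of_notMem (not_mem_self hanti l), Finset.card_univ,
        Fintype.card_fin] at this
    rw [nsz]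
    omega
  have hsumf : (∑ l ∈ Full, (Finset.univ.filter (fun i => l ∈ S i)).card) +
      Full.card * (k - t + 1) ≤ ∑ l ∈ Full, nsz k t S l := by
    calc (∑ l ∈ Full, (Finset.univ.filter (fun i => l ∈ S i)).card) +
        Full.card * (k - t + 1)
        = ∑ l ∈ Full, ((Finset.univ.filter (fun i => l ∈ S i)).card + (k - t + 1)) := by
          rw [Finset.sum_add_distrib, Finset.sum_const, smul_eq_mul]
      _ ≤ ∑ l ∈ Full, nsz k t S l := Finset.sum_le_sum hptw
  have hTc : D.card + Full.card = Touch.card :=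
    Finset.card_sdiff_add_card_eq_card hFT
  have hc1 : Full.card ≤ Full.card * (k - t + 1) :=
    Nat.le_mul_of_pos_right _ (by omega)
  constructor
  · omega
  · intro hXt i
    have hc0 : Full.card = 0 := by
      by_contra hc
      have hcpos : 1 ≤ Full.card := by omega
      have hc3 : (k - t) + Full.card ≤ Full.card * (k - t + 1) := by
        have he : Full.card * (k - t + 1) = Full.card * (k - t) + Full.card := by ring
        have h4 : (k - t) ≤ Full.card * (k - t) := Nat.le_mul_of_pos_left _ hcpos
        omega
      omega
    rcases step1 i with h | ⟨l, -, hl2⟩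
    · rw [hTouch] at h
      exact (Finset.mem_filter.1 h).2
    · rw [Finset.card_eq_zero] at hc0
      rw [hc0] at hl2
      exact absurd hl2 (Finset.notMem_empty l)

/-- An `X` of size `t` touching every class is an SDR. -/
lemma sdr_of_touch {X : Finset ℕ} (htouch : ∀ i, ∃ x ∈ X, x ∈ Pcl k t S i)
    (hXcard : X.card = t) : X ∈ TF k t S := by
  classical
  set g : Fin t → ℕ :=
    fun i => if h : ∃ x, x ∈ X ∧ x ∈ Pcl k t S i then h.choose else 0 with hgdef
  have hg : ∀ i, g i ∈ X ∧ g i ∈ Pcl k t S i := by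
    intro i
    obtain ⟨x, hx1, hx2⟩ := htouch i
    have he : ∃ x, x ∈ X ∧ x ∈ Pcl k t S i := ⟨x, hx1, hx2⟩
    rw [hgdef]
    simp only [dif_pos he]
    exact he.choose_spec
  have hsub : Finset.univ.image g ⊆ X := by
    intro x hx
    obtain ⟨i, -, rfl⟩ := Finset.mem_image.1 hx
    exact (hg i).1
  have hcard : (Finset.univ.image g).card = t := by
    rw [Finset.card_image_of_injOn, Finset.card_univ, Fintype.card_fin]
    intro a _ b _ hab
    by_contra hne
    exact Pcl_disj k t S (fun h => hne h) (hg a).2 (hab ▸ (hg b).2)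
  have heq : Finset.univ.image g = X :=
    Finset.eq_of_subset_of_card_le hsub (by omega)
  exact (mem_TF k t S).2 ⟨g, fun j => (hg j).2, heq.symm⟩

end Gadget3
section Gadget4
attribute [local instance] Classical.propDecidable

variable {k t : ℕ} {S : Fin t → Finset (Fin t)}

lemma full_case (hanti : ∀ i j, j ∈ S i → i ∉ S j)
    (h2 : ∀ i, (S i).card + 2 ≤ k)
    (hsum : ∀ i j : Fin t, i ≠ j → k + 1 ≤ nsz k t S i + nsz k t S j)
    {C : Finset ℕ} (hCG : ∀ B ∈ GF k t S, ∃ x ∈ B, x ∈ C) (hCk : C.card ≤ k)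
    {c : Fin t} (hfull : Pcl k t S c ⊆ C) :
    k ≤ C.card ∧ (C.card = k → C ∈ GF k t S) := by
  classical
  have honefull : ∀ l, l ≠ c → ¬ Pcl k t S l ⊆ C := by
    intro l hl hsubl
    have hdisj : Disjoint (Pcl k t S c) (Pcl k t S l) := by
      rw [Finset.disjoint_left]
      intro x hx hx'
      exact Pcl_disj k t S (Ne.symm hl) hx hx'
    have hsubU : Pcl k t S c ∪ Pcl k t S l ⊆ C := Finset.union_subset hfull hsubl
    have hcard := Finset.card_le_card hsubU
    rw [Finset.card_union_of_disjoint hdisj, card_Pcl, card_Pcl] at hcard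
    have := hsum c l (Ne.symm hl)
    omega
  have htouchS : ∀ j ∈ S c, ∃ x, x ∈ C ∧ x ∈ Pcl k t S j := by
    intro j hj
    by_contra hno
    push_neg at hno
    have hchoice : ∀ l ∈ S j, ∃ y, y ∈ Pcl k t S l ∧ y ∉ C := by
      intro l hl
      have hlc : l ≠ c := by
        intro h
        exact hanti c j hj (h ▸ hl)
      obtain ⟨y, hy1, hy2⟩ := Finset.not_subset.1 (honefull l hlc)
      exact ⟨y, hy1, hy2⟩
    set g : Fin t → ℕ :=
      fun l => if h : ∃ y, y ∈ Pcl k t S l ∧ y ∉ C then h.choose else 0 with hgdef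
    have hg : ∀ l ∈ S j, g l ∈ Pcl k t S l ∧ g l ∉ C := by
      intro l hl
      have he := hchoice l hl
      rw [hgdef]
      simp only [dif_pos he]
      exact he.choose_spec
    have hB : Pcl k t S j ∪ (S j).image g ∈ GF k t S :=
      Finset.mem_biUnion.2 ⟨j, Finset.mem_univ j,
        (mem_GtypeF k t S).2 ⟨g, fun l hl => (hg l hl).1, rfl⟩⟩
    obtain ⟨x, hx1, hx2⟩ := hCG _ hB
    rcases Finset.mem_union.1 hx1 with h | h
    · exact hno x hx2 h
    · obtain ⟨l, hl, hle⟩ := Finset.mem_image.1 h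
      exact (hg l hl).2 (hle ▸ hx2)
  set pk : Fin t → ℕ :=
    fun j => if h : ∃ x, x ∈ C ∧ x ∈ Pcl k t S j then h.choose else 0 with hpkdef
  have hpk : ∀ j ∈ S c, pk j ∈ C ∧ pk j ∈ Pcl k t S j := by
    intro j hj
    have he := htouchS j hj
    rw [hpkdef]
    simp only [dif_pos he]
    exact he.choose_spec
  set U : Finset ℕ := Pcl k t S c ∪ (S c).image pk with hUdef
  have hUsub : U ⊆ C := by
    rw [hUdef]
    refine Finset.union_subset hfull ?_
    intro x hx
    obtain ⟨j, hj, hje⟩ := Finset.mem_image.1 hx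
    exact hje ▸ (hpk j hj).1
  have hUG : U ∈ GtypeF k t S c :=
    (mem_GtypeF k t S).2 ⟨pk, fun j hj => (hpk j hj).2, hUdef⟩
  have hUcard : U.card = k := card_block hanti h2 hUG
  have h1 : k ≤ C.card := hUcard ▸ Finset.card_le_card hUsub
  refine ⟨h1, fun hCkk => ?_⟩
  have : U = C := Finset.eq_of_subset_of_card_le hUsub (by omega)
  rw [← this]
  exact Finset.mem_biUnion.2 ⟨c, Finset.mem_univ c, hUG⟩

lemma card_mixed (htk : t + 1 ≤ k) {Hfin : Finset (Finset ℕ)}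
    (hHu : ∀ A ∈ Hfin, A.card = k - t) (hHe : ∀ A ∈ Hfin, ∀ x ∈ A, Even x)
    {D : Finset ℕ} (hD : D ∈ mixedF k t S Hfin) : D.card = k := by
  obtain ⟨p, hp, rfl⟩ := Finset.mem_image.1 hD
  obtain ⟨hp1, hp2⟩ := Finset.mem_product.1 hp
  have hdisj : Disjoint p.1 p.2 := by
    rw [Finset.disjoint_left]
    intro x hx hx'
    exact allP_odd (sdr_subset_allP hp1 hx) (hHe p.2 hp2 x hx')
  rw [Finset.card_union_of_disjoint hdisj, card_sdr hp1, hHu p.2 hp2]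
  omega

lemma card_mixedF {Hfin : Finset (Finset ℕ)} (hHe : ∀ A ∈ Hfin, ∀ x ∈ A, Even x) :
    (mixedF k t S Hfin).card = (TF k t S).card * Hfin.card := by
  rw [mixedF, Finset.card_image_of_injOn, Finset.card_product]
  intro p hp q hq heq
  simp only [Finset.mem_coe, Finset.mem_product] at hp hq
  dsimp only at heq
  have key : ∀ r : Finset ℕ × Finset ℕ, r.1 ∈ TF k t S → r.2 ∈ Hfin →
      r.1 = (r.1 ∪ r.2).filter (fun x => ¬ Even x) ∧
      r.2 = (r.1 ∪ r.2).filter (fun x => Even x) := by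
    intro r hr1 hr2
    constructor
    · ext x
      rw [Finset.mem_filter, Finset.mem_union]
      constructor
      · intro hx
        exact ⟨Or.inl hx, allP_odd (sdr_subset_allP hr1 hx)⟩

      · rintro ⟨hx | hx, hodd⟩
        · exact hx
        · exact absurd (hHe r.2 hr2 x hx) hodd
    · ext x
      rw [Finset.mem_filter, Finset.mem_union]
      constructor
      · intro hx
        exact ⟨Or.inr hx, hHe r.2 hr2 x hx⟩
      · rintro ⟨hx | hx, heven⟩
        · exact absurd heven (allP_odd (sdr_subset_allP hr1 hx))
        · exact hx
  obtain ⟨hp1', hp2'⟩ := key p hp.1 hp.2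
  obtain ⟨hq1', hq2'⟩ := key q hq.1 hq.2
  have e1 : p.1 = q.1 := by rw [hp1', hq1', heq]
  have e2 : p.2 = q.2 := by rw [hp2', hq2', heq]
  exact Prod.ext e1 e2

lemma GF_mixedF_disjoint (htk : t + 1 ≤ k) {Hfin : Finset (Finset ℕ)}
    (hHu : ∀ A ∈ Hfin, A.card = k - t) (hHe : ∀ A ∈ Hfin, ∀ x ∈ A, Even x) :
    Disjoint (GF k t S) (mixedF k t S Hfin) := by
  rw [Finset.disjoint_left]
  intro B hB hB'
  obtain ⟨i, -, hBi⟩ := Finset.mem_biUnion.1 hB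
  obtain ⟨p, hp, rfl⟩ := Finset.mem_image.1 hB'
  obtain ⟨hp1, hp2⟩ := Finset.mem_product.1 hp
  have hApos : 0 < p.2.card := by rw [hHu p.2 hp2]; omega
  obtain ⟨x, hx⟩ := Finset.card_pos.mp hApos
  have hxB : x ∈ p.1 ∪ p.2 := Finset.mem_union_right _ hx
  exact allP_odd (block_subset_allP hBi hxB) (hHe p.2 hp2 x hx)

lemma intersecting_FF (hanti : ∀ i j, j ∈ S i → i ∉ S j)
    (htot : ∀ i j : Fin t, i ≠ j → j ∈ S i ∨ i ∈ S j)
    (h2 : ∀ i, (S i).card + 2 ≤ k)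
    {Hfin : Finset (Finset ℕ)}
    (hHint : ∀ A ∈ Hfin, ∀ A' ∈ Hfin, ∃ x ∈ A, x ∈ A') :
    ∀ B ∈ FF k t S Hfin, ∀ B' ∈ FF k t S Hfin, ∃ x ∈ B, x ∈ B' := by
  have hGG : ∀ i i' : Fin t, ∀ g g' : Fin t → ℕ,
      (∀ j ∈ S i, g j ∈ Pcl k t S j) → (∀ j ∈ S i', g' j ∈ Pcl k t S j) →
      ∃ x ∈ Pcl k t S i ∪ (S i).image g, x ∈ Pcl k t S i' ∪ (S i').image g' := by
    intro i i' g g' hg hg'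
    by_cases hii : i = i'
    · obtain ⟨y, hy⟩ := Pcl_nonempty (S := S) h2 i
      exact ⟨y, Finset.mem_union_left _ hy, Finset.mem_union_left _ (hii ▸ hy)⟩
    · rcases htot i i' hii with h | h
      · exact ⟨g i', Finset.mem_union_right _ (Finset.mem_image.2 ⟨i', h, rfl⟩),
          Finset.mem_union_left _ (hg i' h)⟩
      · exact ⟨g' i, Finset.mem_union_left _ (hg' i h), Finset.mem_union_right _
          (Finset.mem_image.2 ⟨i, h, rfl⟩)⟩
  intro B hB B' hB'
  rcases Finset.mem_union.1 hB with hBG | hBM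
  · obtain ⟨i, -, hBi⟩ := Finset.mem_biUnion.1 hBG
    obtain ⟨g, hg, rfl⟩ := (mem_GtypeF k t S).1 hBi
    rcases Finset.mem_union.1 hB' with hBG' | hBM'
    · obtain ⟨i', -, hBi'⟩ := Finset.mem_biUnion.1 hBG'
      obtain ⟨g', hg', rfl⟩ := (mem_GtypeF k t S).1 hBi'
      exact hGG i i' g g' hg hg'
    · obtain ⟨p, hp, rfl⟩ := Finset.mem_image.1 hBM'
      obtain ⟨hp1, hp2⟩ := Finset.mem_product.1 hp
      obtain ⟨h, hh, hpe⟩ := (mem_TF k t S).1 hp1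
      refine ⟨h i, Finset.mem_union_left _ (hh i), Finset.mem_union_left _ ?_⟩
      rw [hpe]
      exact Finset.mem_image.2 ⟨i, Finset.mem_univ i, rfl⟩
  · obtain ⟨p, hp, rfl⟩ := Finset.mem_image.1 hBM
    obtain ⟨hp1, hp2⟩ := Finset.mem_product.1 hp
    rcases Finset.mem_union.1 hB' with hBG' | hBM'
    · obtain ⟨i', -, hBi'⟩ := Finset.mem_biUnion.1 hBG'
      obtain ⟨g', hg', rfl⟩ := (mem_GtypeF k t S).1 hBi'
      obtain ⟨h, hh, hpe⟩ := (mem_TF k t S).1 hp1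
      refine ⟨h i', Finset.mem_union_left _ ?_, Finset.mem_union_left _ (hh i')⟩
      rw [hpe]
      exact Finset.mem_image.2 ⟨i', Finset.mem_univ i', rfl⟩
    · obtain ⟨q, hq, rfl⟩ := Finset.mem_image.1 hBM'
      obtain ⟨hq1, hq2⟩ := Finset.mem_product.1 hq
      obtain ⟨x, hx1, hx2⟩ := hHint p.2 hp2 q.2 hq2
      exact ⟨x, Finset.mem_union_right _ hx1, Finset.mem_union_right _ hx2⟩

end Gadget4
section Gadget5
attribute [local instance] Classical.propDecidable

variable {k t : ℕ} {S : Fin t → Finset (Fin t)}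

lemma blocking_main (hanti : ∀ i j, j ∈ S i → i ∉ S j)
    (h2 : ∀ i, (S i).card + 2 ≤ k)
    (hsum : ∀ i j : Fin t, i ≠ j → k + 1 ≤ nsz k t S i + nsz k t S j)
    (htk : t + 1 ≤ k)
    {Hfin : Finset (Finset ℕ)} (hHe : ∀ A ∈ Hfin, ∀ x ∈ A, Even x)
    (hHtr : ∀ Z : Finset ℕ, (∀ A ∈ Hfin, ∃ x ∈ A, x ∈ Z) →
      k - t ≤ Z.card ∧ (Z.card = k - t → Z ∈ Hfin))
    {C : Finset ℕ} (hC : ∀ B ∈ FF k t S Hfin, ∃ x ∈ B, x ∈ C) :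
    k ≤ C.card ∧ (C.card = k → C ∈ FF k t S Hfin) := by
  classical
  by_cases hCk : C.card ≤ k
  swap
  · exact ⟨by omega, fun h => by omega⟩
  have hCG : ∀ B ∈ GF k t S, ∃ x ∈ B, x ∈ C :=
    fun B hB => hC B (Finset.mem_union_left _ hB)
  by_cases hfull : ∃ c, Pcl k t S c ⊆ C
  · obtain ⟨c, hc⟩ := hfull
    have hres := full_case hanti h2 hsum hCG hCk hc
    exact ⟨hres.1, fun h => Finset.mem_union_left _ (hres.2 h)⟩
  · push_neg at hfull
    have hchoice : ∀ l : Fin t, ∃ y, y ∈ Pcl k t S l ∧ y ∉ C := by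
      intro l
      obtain ⟨y, hy1, hy2⟩ := Finset.not_subset.1 (hfull l)
      exact ⟨y, hy1, hy2⟩
    set g0 : Fin t → ℕ :=
      fun l => if h : ∃ y, y ∈ Pcl k t S l ∧ y ∉ C then h.choose else 0 with hg0def
    have hg0 : ∀ l, g0 l ∈ Pcl k t S l ∧ g0 l ∉ C := by
      intro l
      have he := hchoice l
      rw [hg0def]
      simp only [dif_pos he]
      exact he.choose_spec
    have hC0 : Finset.univ.image g0 ∈ TF k t S :=
      (mem_TF k t S).2 ⟨g0, fun j => (hg0 j).1, rfl⟩
    set Z : Finset ℕ := C.filter (fun x => Even x) with hZdef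
    have hZb : ∀ A ∈ Hfin, ∃ x ∈ A, x ∈ Z := by
      intro A hA
      have hmm : Finset.univ.image g0 ∪ A ∈ FF k t S Hfin :=
        Finset.mem_union_right _ (Finset.mem_image.2
          ⟨(Finset.univ.image g0, A), Finset.mem_product.2 ⟨hC0, hA⟩, rfl⟩)
      obtain ⟨x, hx1, hx2⟩ := hC _ hmm
      rcases Finset.mem_union.1 hx1 with h | h
      · obtain ⟨l, -, hle⟩ := Finset.mem_image.1 h
        exact absurd (hle ▸ hx2) (hg0 l).2
      · exact ⟨x, h, Finset.mem_filter.2 ⟨hx2, hHe A hA x h⟩⟩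
    obtain ⟨hZ1, hZ2⟩ := hHtr Z hZb
    set X : Finset ℕ := C ∩ allP k t S with hXdef
    have hXcov : ∀ B ∈ GF k t S, ∃ x ∈ B, x ∈ X := by
      intro B hB
      obtain ⟨i, -, hBi⟩ := Finset.mem_biUnion.1 hB
      obtain ⟨x, hx1, hx2⟩ := hCG B hB
      exact ⟨x, hx1, Finset.mem_inter.2 ⟨hx2, block_subset_allP hBi hx1⟩⟩
    obtain ⟨hXt, hXeq⟩ := cover_bound hanti h2 htk hXcov
    have hdisXZ : Disjoint X Z := by
      rw [Finset.disjoint_left]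
      intro x hx hx'
      exact allP_odd (Finset.mem_inter.1 hx).2 (Finset.mem_filter.1 hx').2
    have hsub2 : X ∪ Z ⊆ C :=
      Finset.union_subset Finset.inter_subset_left (Finset.filter_subset _ _)
    have hcards : X.card + Z.card ≤ C.card := by
      rw [← Finset.card_union_of_disjoint hdisXZ]
      exact Finset.card_le_card hsub2
    refine ⟨by omega, fun hCe => ?_⟩
    have hXcard : X.card = t := by omega
    have hZcard : Z.card = k - t := by omega
    have hXTF : X ∈ TF k t S := sdr_of_touch (hXeq (le_of_eq hXcard)) hXcard
    have hZH : Z ∈ Hfin := hZ2 hZcard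
    have hCeq : X ∪ Z = C := by
      refine Finset.eq_of_subset_of_card_le hsub2 ?_
      rw [Finset.card_union_of_disjoint hdisXZ]
      omega
    rw [← hCeq]
    exact Finset.mem_union_right _ (Finset.mem_image.2
      ⟨(X, Z), Finset.mem_product.2 ⟨hXTF, hZH⟩, rfl⟩)

theorem master (k t : ℕ) (S : Fin t → Finset (Fin t)) (ht1 : 1 ≤ t) (htk : t + 1 ≤ k)
    (hanti : ∀ i j, j ∈ S i → i ∉ S j)
    (htot : ∀ i j : Fin t, i ≠ j → j ∈ S i ∨ i ∈ S j)
    (h2 : ∀ i, (S i).card + 2 ≤ k)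
    (hsum : ∀ i j : Fin t, i ≠ j → k + 1 ≤ nsz k t S i + nsz k t S j) :
    (∑ i : Fin t, ∏ j ∈ S i, nsz k t S j) +
      (∏ j : Fin t, nsz k t S j) * M (k - t) ≤ M k := by
  classical
  obtain ⟨H, hH, hHcard, hHeven⟩ := exists_even_MIF (show 1 ≤ k - t by omega)
  have hMpos : 1 ≤ M (k - t) := M_pos (by omega)
  have hHfin : H.Finite := by
    by_contra hinf
    rw [Set.Infinite.ncard hinf] at hHcard
    omega
  set Hfin : Finset (Finset ℕ) := hHfin.toFinset with hHfindef
  have hmemH : ∀ A : Finset ℕ, A ∈ Hfin ↔ A ∈ H := fun A => Set.Finite.mem_toFinset _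
  have hHu : ∀ A ∈ Hfin, A.card = k - t := fun A hA => hH.1 A ((hmemH A).1 hA)
  have hHe : ∀ A ∈ Hfin, ∀ x ∈ A, Even x := fun A hA => hHeven A ((hmemH A).1 hA)
  have hHint : ∀ A ∈ Hfin, ∀ A' ∈ Hfin, ∃ x ∈ A, x ∈ A' :=
    fun A hA A' hA' => hH.intersecting A ((hmemH A).1 hA) A' ((hmemH A').1 hA')
  have hHtr : ∀ Z : Finset ℕ, (∀ A ∈ Hfin, ∃ x ∈ A, x ∈ Z) →
      k - t ≤ Z.card ∧ (Z.card = k - t → Z ∈ Hfin) := by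
    intro Z hZ
    have hbl : IsBlocking H Z := fun A hA => hZ A ((hmemH A).2 hA)
    constructor
    · rw [← hH.tau_eq]
      exact tau_le_blocking hbl
    · intro hcard
      exact (hmemH Z).2 (hH.mem_of_blocking hbl hcard)
  -- nonemptiness of the base family
  have hFFne : ∃ B0, B0 ∈ FF k t S Hfin := by
    have i0 : Fin t := ⟨0, by omega⟩
    set g0 : Fin t → ℕ := fun l => (Pcl_nonempty (S := S) h2 l).choose with hg0def
    have hg0 : ∀ l, g0 l ∈ Pcl k t S l := fun l => (Pcl_nonempty (S := S) h2 l).choose_spec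
    refine ⟨Pcl k t S i0 ∪ (S i0).image g0, Finset.mem_union_left _ ?_⟩
    exact Finset.mem_biUnion.2 ⟨i0, Finset.mem_univ i0,
      (mem_GtypeF k t S).2 ⟨g0, fun j _ => hg0 j, rfl⟩⟩
  have hintF := intersecting_FF hanti htot h2 hHint
  have huniF : ∀ B ∈ FF k t S Hfin, B.card = k := by
    intro B hB
    rcases Finset.mem_union.1 hB with h | h
    · obtain ⟨i, -, hBi⟩ := Finset.mem_biUnion.1 h
      exact card_block hanti h2 hBi
    · exact card_mixed htk hHu hHe h
  have hbm : ∀ C : Finset ℕ, (∀ B ∈ FF k t S Hfin, ∃ x ∈ B, x ∈ C) →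
      k ≤ C.card ∧ (C.card = k → C ∈ FF k t S Hfin) :=
    fun C hC => blocking_main hanti h2 hsum htk hHe hHtr hC
  have hMIF : MIF (↑(FF k t S Hfin) : Set (Finset ℕ)) k := by
    obtain ⟨B0, hB0⟩ := hFFne
    have hbl0 : IsBlocking (↑(FF k t S Hfin) : Set (Finset ℕ)) B0 :=
      fun B hB => hintF B (Finset.mem_coe.1 hB) B0 hB0
    have htauF : tau (↑(FF k t S Hfin) : Set (Finset ℕ)) = k := by
      refine le_antisymm ?_ ?_
      · exact le_trans (tau_le_blocking hbl0) (le_of_eq (huniF B0 hB0))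
      · have hne : Set.Nonempty {n | ∃ C : Finset ℕ, C.card = n ∧
            IsBlocking (↑(FF k t S Hfin) : Set (Finset ℕ)) C} := ⟨B0.card, B0, rfl, hbl0⟩
        obtain ⟨C, hC1, hC2⟩ := Nat.sInf_mem hne
        rw [tau, ← hC1]
        exact (hbm C (fun B hB => hC2 B (Finset.mem_coe.2 hB))).1
    refine ⟨?_, ⟨B0, hbl0⟩, ?_⟩
    · intro B hB
      exact huniF B (Finset.mem_coe.1 hB)
    · ext C
      constructor
      · intro hCm
        refine ⟨fun B hB => hintF B (Finset.mem_coe.1 hB) C (Finset.mem_coe.1 hCm), ?_⟩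
        rw [htauF]
        exact huniF C (Finset.mem_coe.1 hCm)
      · rintro ⟨hbl, hcard⟩
        rw [htauF] at hcard
        exact Finset.mem_coe.2 ((hbm C (fun B hB => hbl B (Finset.mem_coe.2 hB))).2 hcard)
  have hHfcard : Hfin.card = M (k - t) := by
    rw [hHfindef, ← hHcard, Set.ncard_eq_toFinset_card _ hHfin]
  have hcount : (↑(FF k t S Hfin) : Set (Finset ℕ)).ncard =
      (∑ i : Fin t, ∏ j ∈ S i, nsz k t S j) +
        (∏ j : Fin t, nsz k t S j) * M (k - t) := by
    rw [Set.ncard_coe_finset, FF,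
      Finset.card_union_of_disjoint (GF_mixedF_disjoint htk hHu hHe),
      card_GF hanti h2, card_mixedF hHe, card_TF, hHfcard]
  exact le_trans (le_of_eq hcount.symm) (le_M hMIF)

end Gadget5
section Gadget6

lemma mod_add_cancel {t i d e : ℕ} (h : (i + d) % t = (i + e) % t) : d % t = e % t :=
  Nat.ModEq.add_left_cancel' i h

lemma mod_inv_dist {t i d : ℕ} (hi : i < t) (hd : d ≤ t) :
    (((i + d) % t) + (t - d)) % t = i := by
  have h1 : ((i + d) % t + (t - d)) % t = ((i + d) + (t - d)) % t :=
    Nat.ModEq.add_right (t - d) (Nat.mod_modEq (i + d) t)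
  have h2 : (i + d) + (t - d) = i + t := by omega
  rw [h1, h2, Nat.add_mod_right, Nat.mod_eq_of_lt hi]

lemma dist_sum {t i j d e : ℕ} (hi : i < t) (hd1 : 1 ≤ d) (hd2 : d < t)
    (he1 : 1 ≤ e) (he2 : e < t) (hj : j = (i + d) % t) (hij : (j + e) % t = i) :
    d + e = t := by
  have h4 : (((i + d) % t) + (t - d)) % t = i := mod_inv_dist hi (by omega)
  rw [hj] at hij
  have h5 : ((i + d) % t + e) % t = ((i + d) % t + (t - d)) % t := by rw [hij, h4]
  have h6 : e % t = (t - d) % t := mod_add_cancel h5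
  rw [Nat.mod_eq_of_lt he2, Nat.mod_eq_of_lt (by omega : t - d < t)] at h6
  omega

/-- Cyclic-type tournament out-neighbourhoods on `Fin t`: distances `1,…,r-1`,
together with distance `r` for the first `e` vertices. -/
def Smod (t r e : ℕ) (i : Fin t) : Finset (Fin t) :=
  ((Finset.Icc 1 (r-1)) ∪ (if (i : ℕ) < e then {r} else ∅)).image
    (fun d => ⟨((i : ℕ) + d) % t, Nat.mod_lt _ i.pos⟩)

lemma mem_Smod {t r e : ℕ} {i j : Fin t} :
    j ∈ Smod t r e i ↔
      ∃ d, ((1 ≤ d ∧ d ≤ r - 1) ∨ (d = r ∧ (i : ℕ) < e)) ∧ (j : ℕ) = ((i : ℕ) + d) % t := by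
  rw [Smod, Finset.mem_image]
  constructor
  · rintro ⟨d, hd, rfl⟩
    rcases Finset.mem_union.1 hd with h | h
    · rw [Finset.mem_Icc] at h
      exact ⟨d, Or.inl h, rfl⟩
    · by_cases hie : (i : ℕ) < e
      · rw [if_pos hie, Finset.mem_singleton] at h
        exact ⟨d, Or.inr ⟨h, hie⟩, rfl⟩
      · rw [if_neg hie] at h
        exact absurd h (Finset.notMem_empty d)
  · rintro ⟨d, hd, hj⟩
    refine ⟨d, ?_, ?_⟩
    · rcases hd with h | ⟨rfl, hie⟩
      · exact Finset.mem_union_left _ (Finset.mem_Icc.2 h)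
      · exact Finset.mem_union_right _ (by rw [if_pos hie]; exact Finset.mem_singleton_self _)
    · exact Fin.ext hj.symm

lemma card_Smod {t r e : ℕ} (hr1 : 1 ≤ r) (hrt : r - 1 < t) (het : 0 < e → r < t)
    (i : Fin t) :
    (Smod t r e i).card = (r - 1) + (if (i : ℕ) < e then 1 else 0) := by
  have hdlt : ∀ d ∈ (Finset.Icc 1 (r-1)) ∪ (if (i : ℕ) < e then {r} else ∅), d < t := by
    intro d hd
    rcases Finset.mem_union.1 hd with h | h
    · rw [Finset.mem_Icc] at h
      omega
    · by_cases hie : (i : ℕ) < e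
      · rw [if_pos hie, Finset.mem_singleton] at h
        have := het (by omega)
        omega
      · rw [if_neg hie] at h
        exact absurd h (Finset.notMem_empty d)
  rw [Smod, Finset.card_image_of_injOn]
  · rw [Finset.card_union_of_disjoint, Nat.card_Icc]
    · have hc : (if (i : ℕ) < e then ({r} : Finset ℕ) else ∅).card =
          (if (i : ℕ) < e then 1 else 0) := by
        by_cases hie : (i : ℕ) < e
        · rw [if_pos hie, if_pos hie, Finset.card_singleton]
        · rw [if_neg hie, if_neg hie, Finset.card_empty]
      rw [hc]
      omega
    · rw [Finset.disjoint_left]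
      intro d hd hd'
      rw [Finset.mem_Icc] at hd
      by_cases hie : (i : ℕ) < e
      · rw [if_pos hie, Finset.mem_singleton] at hd'
        omega
      · rw [if_neg hie] at hd'
        exact absurd hd' (Finset.notMem_empty d)
  · intro d hd d' hd' heq
    simp only [Finset.mem_coe] at hd hd'
    have h1 : ((i : ℕ) + d) % t = ((i : ℕ) + d') % t := by
      have := congrArg Fin.val heq
      exact this
    have h2 := mod_add_cancel h1
    rw [Nat.mod_eq_of_lt (hdlt d hd), Nat.mod_eq_of_lt (hdlt d' hd')] at h2
    exact h2

end Gadget6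
section Gadget7

lemma anti_odd (k r : ℕ) (hr : 1 ≤ r) :
    ∀ i j : Fin (2*r-1), j ∈ Smod (2*r-1) r 0 i → i ∉ Smod (2*r-1) r 0 j := by
  intro i j hj hi
  obtain ⟨d, hd, hjd⟩ := mem_Smod.1 hj
  obtain ⟨e, he, hie⟩ := mem_Smod.1 hi
  rcases hd with hd | ⟨-, hd2⟩
  swap; · omega
  rcases he with he | ⟨-, he2⟩
  swap; · omega
  have hsum : d + e = 2*r-1 :=
    dist_sum i.isLt hd.1 (by omega) he.1 (by omega) hjd hie.symm
  omega

lemma tot_helper_odd (r : ℕ) (hr : 1 ≤ r) {i j : Fin (2*r-1)} (hij : (i:ℕ) < (j:ℕ)) :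
    j ∈ Smod (2*r-1) r 0 i ∨ i ∈ Smod (2*r-1) r 0 j := by
  have hit : (i:ℕ) < 2*r-1 := i.isLt
  have hjt : (j:ℕ) < 2*r-1 := j.isLt
  by_cases hd : (j:ℕ) - (i:ℕ) ≤ r - 1
  · left
    refine mem_Smod.2 ⟨(j:ℕ) - (i:ℕ), Or.inl ⟨by omega, hd⟩, ?_⟩
    have h1 : (i:ℕ) + ((j:ℕ) - (i:ℕ)) = (j:ℕ) := by omega
    rw [h1, Nat.mod_eq_of_lt hjt]
  · right
    refine mem_Smod.2 ⟨2*r-1 - ((j:ℕ) - (i:ℕ)), Or.inl ⟨by omega, by omega⟩, ?_⟩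
    have h1 : (j:ℕ) + (2*r-1 - ((j:ℕ) - (i:ℕ))) = (i:ℕ) + (2*r-1) := by omega
    rw [h1, Nat.add_mod_right]
    exact (Nat.mod_eq_of_lt hit).symm

lemma tot_odd (r : ℕ) (hr : 1 ≤ r) :
    ∀ i j : Fin (2*r-1), i ≠ j → j ∈ Smod (2*r-1) r 0 i ∨ i ∈ Smod (2*r-1) r 0 j := by
  intro i j hij
  rcases Nat.lt_trichotomy (i:ℕ) (j:ℕ) with h | h | h
  · exact tot_helper_odd r hr h
  · exact absurd (Fin.ext h) hij
  · exact (tot_helper_odd r hr h).symm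

lemma anti_even (r : ℕ) (hr : 1 ≤ r) :
    ∀ i j : Fin (2*r), j ∈ Smod (2*r) r r i → i ∉ Smod (2*r) r r j := by
  intro i j hj hi
  obtain ⟨d, hd, hjd⟩ := mem_Smod.1 hj
  obtain ⟨e, he, hie⟩ := mem_Smod.1 hi
  have hd1 : 1 ≤ d ∧ d ≤ r := by rcases hd with h | h <;> omega
  have he1 : 1 ≤ e ∧ e ≤ r := by rcases he with h | h <;> omega
  have hsum : d + e = 2*r :=
    dist_sum i.isLt hd1.1 (by omega) he1.1 (by omega) hjd hie.symm
  have hdr : d = r := by omega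
  have her : e = r := by omega
  have hir : (i:ℕ) < r := by rcases hd with h | h <;> omega
  have hjr : (j:ℕ) < r := by rcases he with h | h <;> omega
  rw [hdr] at hjd
  rw [Nat.mod_eq_of_lt (by omega : (i:ℕ) + r < 2*r)] at hjd
  omega

lemma tot_helper_even (r : ℕ) (hr : 1 ≤ r) {i j : Fin (2*r)} (hij : (i:ℕ) < (j:ℕ)) :
    j ∈ Smod (2*r) r r i ∨ i ∈ Smod (2*r) r r j := by
  have hit : (i:ℕ) < 2*r := i.isLt
  have hjt : (j:ℕ) < 2*r := j.isLt
  by_cases hd : (j:ℕ) - (i:ℕ) ≤ r - 1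
  · left
    refine mem_Smod.2 ⟨(j:ℕ) - (i:ℕ), Or.inl ⟨by omega, hd⟩, ?_⟩
    have h1 : (i:ℕ) + ((j:ℕ) - (i:ℕ)) = (j:ℕ) := by omega
    rw [h1, Nat.mod_eq_of_lt hjt]
  · by_cases hdr : (j:ℕ) - (i:ℕ) = r
    · left
      have hir : (i:ℕ) < r := by omega
      refine mem_Smod.2 ⟨r, Or.inr ⟨rfl, hir⟩, ?_⟩
      have h1 : (i:ℕ) + r = (j:ℕ) := by omega
      rw [h1, Nat.mod_eq_of_lt hjt]
    · right
      refine mem_Smod.2 ⟨2*r - ((j:ℕ) - (i:ℕ)), Or.inl ⟨by omega, by omega⟩, ?_⟩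
      have h1 : (j:ℕ) + (2*r - ((j:ℕ) - (i:ℕ))) = (i:ℕ) + (2*r) := by omega
      rw [h1, Nat.add_mod_right]
      exact (Nat.mod_eq_of_lt hit).symm

lemma tot_even (r : ℕ) (hr : 1 ≤ r) :
    ∀ i j : Fin (2*r), i ≠ j → j ∈ Smod (2*r) r r i ∨ i ∈ Smod (2*r) r r j := by
  intro i j hij
  rcases Nat.lt_trichotomy (i:ℕ) (j:ℕ) with h | h | h
  · exact tot_helper_even r hr h
  · exact absurd (Fin.ext h) hij
  · exact (tot_helper_even r hr h).symm

end Gadget7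
section Final

theorem odd_bound (k r : ℕ) (hr : 1 ≤ r) (hk : 2*r ≤ k) :
    (2*r - 1) * (k - r + 1) ^ (r - 1) +
      (k - r + 1) ^ (2*r - 1) * M (k - (2*r - 1)) ≤ M k := by
  set t := 2*r - 1 with htdef
  set S : Fin t → Finset (Fin t) := Smod t r 0 with hSdef
  have hcard : ∀ i, (S i).card = r - 1 := by
    intro i
    rw [hSdef, card_Smod hr (by omega) (by omega), if_neg (by omega)]
    omega
  have hnsz : ∀ j, nsz k t S j = k - r + 1 := by
    intro j
    rw [nsz, hcard]
    omega
  have hmaster := master k t S (by omega) (by omega)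
    (anti_odd k r hr) (tot_odd r hr)
    (fun i => by rw [hcard]; omega)
    (fun i j _ => by rw [hnsz, hnsz]; omega)
  refine le_trans (le_of_eq ?_) hmaster
  congr 1
  · rw [Finset.sum_congr rfl (fun i _ => ?_)]
    · rw [Finset.sum_const, Finset.card_univ, Fintype.card_fin, smul_eq_mul]
    · rw [Finset.prod_congr rfl (fun j _ => hnsz j), Finset.prod_const, hcard]
  · congr 1
    rw [Finset.prod_congr rfl (fun j _ => hnsz j), Finset.prod_const, Finset.card_univ,
      Fintype.card_fin]

theorem even_bound (k r : ℕ) (hr : 1 ≤ r) (hk : 2*r + 1 ≤ k) :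
    2*r * (k - r) ^ (r - 1) +
      (k - r) ^ r * (k - r + 1) ^ r * M (k - 2*r) ≤ M k := by
  set t := 2*r with htdef
  set S : Fin t → Finset (Fin t) := Smod t r r with hSdef
  have hcard : ∀ i, (S i).card = (r - 1) + (if (i:ℕ) < r then 1 else 0) := by
    intro i
    rw [hSdef, card_Smod hr (by omega) (by omega)]
  have hcard_le : ∀ i, (S i).card ≤ r := by
    intro i
    rw [hcard]
    by_cases h : (i:ℕ) < r <;> simp [h] <;> omega
  have hcard_ge : ∀ i, r - 1 ≤ (S i).card := by
    intro i
    rw [hcard]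
    omega
  have hnsz_ge : ∀ j, k - r ≤ nsz k t S j := by
    intro j
    rw [nsz]
    have := hcard_le j
    omega
  have hnsz_eq : ∀ j : Fin t, nsz k t S j = if (j:ℕ) < r then k - r else k - r + 1 := by
    intro j
    rw [nsz, hcard]
    by_cases h : (j:ℕ) < r <;> simp [h] <;> omega
  have hmaster := master k t S (by omega) (by omega)
    (anti_even r hr) (tot_even r hr)
    (fun i => by have := hcard_le i; omega)
    (fun i j _ => by have h1 := hnsz_ge i; have h2 := hnsz_ge j; omega)
  refine le_trans (add_le_add ?_ (le_of_eq ?_)) hmaster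
  · -- sum lower bound
    have hterm : ∀ i : Fin t, (k - r) ^ (r - 1) ≤ ∏ j ∈ S i, nsz k t S j := by
      intro i
      calc (k - r) ^ (r - 1) ≤ (k - r) ^ (S i).card :=
            Nat.pow_le_pow_right (by omega) (hcard_ge i)
        _ = ∏ j ∈ S i, (k - r) := (Finset.prod_const _).symm
        _ ≤ ∏ j ∈ S i, nsz k t S j :=
            Finset.prod_le_prod (fun j _ => Nat.zero_le _) (fun j _ => hnsz_ge j)
    calc 2*r * (k - r) ^ (r - 1) = ∑ _i : Fin t, (k - r) ^ (r - 1) := by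
          rw [Finset.sum_const, Finset.card_univ, Fintype.card_fin, smul_eq_mul]
      _ ≤ ∑ i : Fin t, ∏ j ∈ S i, nsz k t S j := Finset.sum_le_sum (fun i _ => hterm i)
  · -- product equality
    congr 1
    have hsplit := Finset.prod_filter_mul_prod_filter_not
      (Finset.univ : Finset (Fin t)) (fun j => (j:ℕ) < r) (fun j => nsz k t S j)
    have hflt : (Finset.univ.filter (fun j : Fin t => (j:ℕ) < r)) =
        (Finset.range r).image (fun a => (⟨a % t, Nat.mod_lt _ (by omega)⟩ : Fin t)) := by
      ext j
      simp only [Finset.mem_filter, Finset.mem_univ, true_and, Finset.mem_image,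
        Finset.mem_range]
      constructor
      · intro h
        exact ⟨(j:ℕ), h, Fin.ext (by simp [Nat.mod_eq_of_lt j.isLt])⟩
      · rintro ⟨a, ha, rfl⟩
        simpa [Nat.mod_eq_of_lt (show a < t by omega)] using ha
    have hfltcard : (Finset.univ.filter (fun j : Fin t => (j:ℕ) < r)).card = r := by
      rw [hflt, Finset.card_image_of_injOn, Finset.card_range]
      intro a ha b hb hab
      have h1 := congrArg Fin.val hab
      dsimp only at h1
      simp only [Finset.mem_coe, Finset.mem_range] at ha hb
      rwa [Nat.mod_eq_of_lt (show a < t by omega), Nat.mod_eq_of_lt (show b < t by omega)]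
        at h1
    have hflt2card : (Finset.univ.filter (fun j : Fin t => ¬ (j:ℕ) < r)).card = r := by
      have h1 := Finset.card_filter_add_card_filter_not
        (s := (Finset.univ : Finset (Fin t))) (p := fun j => (j:ℕ) < r)
      rw [Finset.card_univ, Fintype.card_fin] at h1
      omega
    have hp1 : ∏ j ∈ Finset.univ.filter (fun j : Fin t => (j:ℕ) < r), nsz k t S j =
        (k - r) ^ r := by
      rw [Finset.prod_congr rfl (fun j hj => ?_), Finset.prod_const, hfltcard]
      rw [hnsz_eq, if_pos (Finset.mem_filter.1 hj).2]
    have hp2 : ∏ j ∈ Finset.univ.filter (fun j : Fin t => ¬ (j:ℕ) < r), nsz k t S j =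
        (k - r + 1) ^ r := by
      rw [Finset.prod_congr rfl (fun j hj => ?_), Finset.prod_const, hflt2card]
      rw [hnsz_eq, if_neg (Finset.mem_filter.1 hj).2]
    rw [← hsplit, hp1, hp2]

end Final
theorem stmt_16 (k t r : ℕ) (hk : t + 1 ≤ k) :
    (1 ≤ r → t = 2 * r - 1 →
      (2 * r - 1) * (k - r + 1) ^ (r - 1) +
        (k - r + 1) ^ (2 * r - 1) * M (k - (2 * r - 1)) ≤ M k) ∧
    (1 ≤ r → t = 2 * r →
      2 * r * (k - r) ^ (r - 1) +
        (k - r) ^ r * (k - r + 1) ^ r * M (k - 2 * r) ≤ M k) := by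
  constructor
  · intro hr ht
    exact odd_bound k r hr (by omega)
  · intro hr ht
    exact even_bound k r hr (by omega)
end
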